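/- arXiv:2308.03178 — 2 statements merged into one kernel-verified Lean document; each statement's English description precedes it below -/
import Mathlib

section
/- Let X be a real Banach space possessing a biorthogonal system bounded by a constant C, i.e. sequences {x_i} ⊂ X and {f_i} ⊂ X* with f_i(x_j) = δ_{ij} and ‖x_i‖·‖f_i‖ ≤ C for all i. Then there exists a bounded multifunction F : [0,1] → 2^X \ {∅} with F(t) convex for all t, such that I(F) = ∅. -/
open Pointwise Filter Metric Set

/-- A tagged partition of `[0,1]` into finitely many segments with tags. -/
structure TaggedPartition where
  n : ℕ
  pt : Fin (n + 1) → ℝ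
  tag : Fin n → ℝ
  pt_zero : pt 0 = 0
  pt_last : pt (Fin.last n) = 1
  pt_mono : Monotone pt
  tag_mem : ∀ i : Fin n, tag i ∈ Set.Icc (pt i.castSucc) (pt i.succ)

/-- The diameter (mesh) of a tagged partition. -/
noncomputable def TaggedPartition.mesh (P : TaggedPartition) : ℝ :=
  ⨆ i : Fin P.n, (P.pt i.succ - P.pt i.castSucc)

/-- Riemann integral sum of a multifunction, using Minkowski sums and
pointwise scalar multiples of sets. -/
noncomputable def msum {X : Type*} [NormedAddCommGroup X] [NormedSpace ℝ X]
    (F : ℝ → Set X) (P : TaggedPartition) : Set X :=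
  ∑ i : Fin P.n, (P.pt i.succ - P.pt i.castSucc) • F (P.tag i)

/-- The set `I(F)` of limits of Riemann integral sums of a multifunction `F`:
all closed nonempty subsets that are Hausdorff-distance limits of sequences of Riemann
sums along sequences of tagged partitions whose diameters tend to `0`. -/
def limitSets {X : Type*} [NormedAddCommGroup X] [NormedSpace ℝ X]
    (F : ℝ → Set X) : Set (Set X) :=
  {A | A.Nonempty ∧ IsClosed A ∧ ∃ P : ℕ → TaggedPartition,
    Tendsto (fun k => (P k).mesh) atTop (nhds 0) ∧
    Tendsto (fun k => EMetric.hausdorffEdist (msum F (P k)) A) atTop (nhds 0)}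

namespace RSAux

lemma fin_telescope {n : ℕ} (u : Fin (n + 1) → ℝ) :
    ∑ i : Fin n, (u i.succ - u i.castSucc) = u (Fin.last n) - u 0 := by
  induction n with
  | zero => simp
  | succ n ih =>
    rw [Fin.sum_univ_castSucc]
    have ih' := ih (fun k : Fin (n+1) => u k.castSucc)
    have h2 : ∑ i : Fin n, (u i.castSucc.succ - u i.castSucc.castSucc)
        = ∑ i : Fin n, (u i.succ.castSucc - u i.castSucc.castSucc) := by
      refine Finset.sum_congr rfl (fun i _ => ?_)
      rw [Fin.succ_castSucc]
    rw [h2, ih']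
    have h3 : (Fin.last n).succ = Fin.last (n+1) := Fin.succ_last n
    have h4 : ((0 : Fin (n+1)).castSucc) = (0 : Fin (n+2)) := rfl
    rw [h3, h4]
    ring

def len (P : TaggedPartition) (i : Fin P.n) : ℝ := P.pt i.succ - P.pt i.castSucc

lemma len_nonneg (P : TaggedPartition) (i : Fin P.n) : 0 ≤ len P i :=
  sub_nonneg.2 (P.pt_mono (Fin.castSucc_le_succ i))

lemma n_pos (P : TaggedPartition) : 0 < P.n := by
  rcases Nat.eq_zero_or_pos P.n with h | h
  · exfalso
    have h0 := P.pt_zero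
    have h1 := P.pt_last
    have : (0 : Fin (P.n + 1)) = Fin.last P.n := by
      apply Fin.ext
      simp [h]
    rw [← this, h0] at h1
    norm_num at h1
  · exact h

lemma sum_len (P : TaggedPartition) : ∑ i, len P i = 1 := by
  unfold len
  rw [fin_telescope, P.pt_last, P.pt_zero]
  ring

lemma len_le_mesh (P : TaggedPartition) (i : Fin P.n) : len P i ≤ P.mesh := by
  have : BddAbove (Set.range fun i : Fin P.n => P.pt i.succ - P.pt i.castSucc) :=
    (Set.finite_range _).bddAbove
  exact le_ciSup this i

lemma tag_mem01 (P : TaggedPartition) (i : Fin P.n) : P.tag i ∈ Set.Icc (0:ℝ) 1 := by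
  obtain ⟨h1, h2⟩ := P.tag_mem i
  constructor
  · calc (0:ℝ) = P.pt 0 := P.pt_zero.symm
    _ ≤ P.pt i.castSucc := P.pt_mono (Fin.zero_le _)
    _ ≤ P.tag i := h1
  · calc P.tag i ≤ P.pt i.succ := h2
    _ ≤ P.pt (Fin.last P.n) := P.pt_mono (Fin.le_last _)
    _ = 1 := P.pt_last

lemma mesh_nonneg (P : TaggedPartition) : 0 ≤ P.mesh := by
  have := n_pos P
  have i : Fin P.n := ⟨0, this⟩
  exact le_trans (len_nonneg P i) (len_le_mesh P i)

noncomputable def hvs (θ t : ℝ) : ℝ := if θ ≤ t then 1 else 0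

lemma hvs_nonneg (θ t : ℝ) : 0 ≤ hvs θ t := by unfold hvs; split <;> norm_num

lemma hvs_le_one (θ t : ℝ) : hvs θ t ≤ 1 := by unfold hvs; split <;> norm_num

lemma key_ineq {pc ps ξ θ δ : ℝ} (h1 : pc ≤ ξ) (h2 : ξ ≤ ps) (h3 : ps - pc ≤ δ) :
    |(ps - pc) * hvs θ ξ - (max ps θ - max pc θ)|
      ≤ max (θ-δ) (min ps (θ+δ)) - max (θ-δ) (min pc (θ+δ)) := by
  have hps : pc ≤ ps := le_trans h1 h2
  have clipmono : max (θ-δ) (min pc (θ+δ)) ≤ max (θ-δ) (min ps (θ+δ)) :=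
    max_le_max le_rfl (min_le_min hps le_rfl)
  unfold hvs
  by_cases hξ : θ ≤ ξ
  · rw [if_pos hξ]
    have hmps : max ps θ = ps := max_eq_left (le_trans hξ h2)
    by_cases hpc : θ ≤ pc
    · rw [hmps, max_eq_left hpc]
      simpa using sub_nonneg.2 clipmono
    · push_neg at hpc
      rw [hmps, max_eq_right hpc.le]
      have e1 : max (θ-δ) (min pc (θ+δ)) = pc := by
        rw [min_eq_left (by linarith), max_eq_right (by linarith)]
      have e2 : max (θ-δ) (min ps (θ+δ)) = ps := by
        rw [min_eq_left (by linarith), max_eq_right (by linarith)]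
      rw [e1, e2, abs_le]
      constructor <;> linarith
  · rw [if_neg hξ]
    push_neg at hξ
    by_cases hps' : θ ≤ ps
    · have e0 : max ps θ = ps := max_eq_left hps'
      have e0' : max pc θ = θ := max_eq_right (by linarith)
      have e1 : max (θ-δ) (min pc (θ+δ)) = pc := by
        rw [min_eq_left (by linarith), max_eq_right (by linarith)]
      have e2 : max (θ-δ) (min ps (θ+δ)) = ps := by
        rw [min_eq_left (by linarith), max_eq_right (by linarith)]
      rw [e0, e0', e1, e2, abs_le]
      constructor <;> linarith
    · push_neg at hps'
      rw [max_eq_right hps'.le, max_eq_right (by linarith : pc ≤ θ)]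
      simpa using sub_nonneg.2 clipmono

lemma sigma_est (P : TaggedPartition) {θ δ : ℝ} (hθ0 : 0 ≤ θ) (hθ1 : θ ≤ 1)
    (hδ : ∀ i, len P i ≤ δ) :
    |(∑ i, len P i * hvs θ (P.tag i)) - (1 - θ)| ≤ 2*δ := by
  have hδ0 : 0 ≤ δ := by
    have i : Fin P.n := ⟨0, n_pos P⟩
    exact le_trans (len_nonneg P i) (hδ i)
  have hM : ∑ i : Fin P.n, (max (P.pt i.succ) θ - max (P.pt i.castSucc) θ) = 1 - θ := by
    have := fin_telescope (fun k : Fin (P.n+1) => max (P.pt k) θ)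
    rw [this, P.pt_last, P.pt_zero, max_eq_left hθ1, max_eq_right hθ0]
  have hC : ∑ i : Fin P.n,
      (max (θ-δ) (min (P.pt i.succ) (θ+δ)) - max (θ-δ) (min (P.pt i.castSucc) (θ+δ))) ≤ 2*δ := by
    have := fin_telescope (fun k : Fin (P.n+1) => max (θ-δ) (min (P.pt k) (θ+δ)))
    rw [this, P.pt_last, P.pt_zero]
    have b1 : max (θ-δ) (min 1 (θ+δ)) ≤ θ+δ :=
      max_le (by linarith) (min_le_right _ _)
    have b2 : θ-δ ≤ max (θ-δ) (min 0 (θ+δ)) := le_max_left _ _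
    linarith
  calc |(∑ i, len P i * hvs θ (P.tag i)) - (1 - θ)|
      = |∑ i : Fin P.n, (len P i * hvs θ (P.tag i)
          - (max (P.pt i.succ) θ - max (P.pt i.castSucc) θ))| := by
        rw [Finset.sum_sub_distrib, hM]
    _ ≤ ∑ i : Fin P.n, |len P i * hvs θ (P.tag i)
          - (max (P.pt i.succ) θ - max (P.pt i.castSucc) θ)| :=
        Finset.abs_sum_le_sum_abs _ _
    _ ≤ ∑ i : Fin P.n,
          (max (θ-δ) (min (P.pt i.succ) (θ+δ)) - max (θ-δ) (min (P.pt i.castSucc) (θ+δ))) := by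
        refine Finset.sum_le_sum (fun i _ => ?_)
        exact key_ineq (P.tag_mem i).1 (P.tag_mem i).2 (hδ i)
    _ ≤ 2*δ := hC


noncomputable def dig (j : ℕ) (t : ℝ) : ℝ :=
  ∑ m ∈ Finset.range (2^j),
    (hvs ((2*m+1 : ℕ) / 2^(j+1)) t - hvs ((2*m+2 : ℕ) / 2^(j+1)) t)

lemma hvs_anti {θ θ' : ℝ} (h : θ ≤ θ') (t : ℝ) : hvs θ' t ≤ hvs θ t := by
  unfold hvs
  by_cases h' : θ' ≤ t
  · rw [if_pos h', if_pos (le_trans h h')]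
  · rw [if_neg h']
    split <;> norm_num

lemma dd_le {aN bN r : ℕ} (h : aN ≤ bN) : ((aN:ℕ):ℝ)/2^r ≤ ((bN:ℕ):ℝ)/2^r := by
  have h' : (aN:ℝ) ≤ (bN:ℝ) := by exact_mod_cast h
  gcongr

lemma summand_nonneg (j m : ℕ) (t : ℝ) :
    0 ≤ hvs ((2*m+1 : ℕ) / 2^(j+1)) t - hvs ((2*m+2 : ℕ) / 2^(j+1)) t :=
  sub_nonneg.2 (hvs_anti (dd_le (by omega)) t)

lemma dig_nonneg (j : ℕ) (t : ℝ) : 0 ≤ dig j t :=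
  Finset.sum_nonneg (fun m _ => summand_nonneg j m t)

lemma dig_one {j m : ℕ} {t : ℝ} (hm : m < 2^j)
    (h1 : ((2*m+1:ℕ):ℝ)/2^(j+1) ≤ t) (h2 : t < ((2*m+2:ℕ):ℝ)/2^(j+1)) : dig j t = 1 := by
  unfold dig
  rw [Finset.sum_eq_single m]
  · unfold hvs
    rw [if_pos h1, if_neg (not_le.2 h2)]
    norm_num
  · intro m' _ hne
    rcases lt_or_gt_of_ne hne with hlt | hgt
    · have hb : ((2*m'+2:ℕ):ℝ)/2^(j+1) ≤ t := le_trans (dd_le (by omega)) h1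
      have ha : ((2*m'+1:ℕ):ℝ)/2^(j+1) ≤ t := le_trans (dd_le (by omega)) h1
      unfold hvs
      rw [if_pos ha, if_pos hb]
      ring
    · have ha : ¬ (((2*m'+1:ℕ):ℝ)/2^(j+1) ≤ t) :=
        not_le.2 (lt_of_lt_of_le h2 (dd_le (by omega)))
      have hb : ¬ (((2*m'+2:ℕ):ℝ)/2^(j+1) ≤ t) :=
        not_le.2 (lt_of_lt_of_le h2 (dd_le (by omega)))
      unfold hvs
      rw [if_neg ha, if_neg hb]
      ring
  · intro h
    exact absurd (Finset.mem_range.2 hm) h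

lemma dig_zero {j : ℕ} {t : ℝ}
    (h : ∀ m, m < 2^j → ¬(((2*m+1:ℕ):ℝ)/2^(j+1) ≤ t ∧ t < ((2*m+2:ℕ):ℝ)/2^(j+1))) :
    dig j t = 0 := by
  unfold dig
  apply Finset.sum_eq_zero
  intro m hm
  rw [Finset.mem_range] at hm
  by_cases ha : ((2*m+1:ℕ):ℝ)/2^(j+1) ≤ t
  · have hb : ((2*m+2:ℕ):ℝ)/2^(j+1) ≤ t := not_lt.1 (fun hc => h m hm ⟨ha, hc⟩)
    unfold hvs
    rw [if_pos ha, if_pos hb]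
    ring
  · have hb : ¬ (((2*m+2:ℕ):ℝ)/2^(j+1) ≤ t) := fun hb => ha (le_trans (dd_le (by omega)) hb)
    unfold hvs
    rw [if_neg ha, if_neg hb]
    ring

lemma dig_dichot (j : ℕ) (t : ℝ) : dig j t = 0 ∨ dig j t = 1 := by
  by_cases hex : ∃ m, m < 2^j ∧ ((2*m+1:ℕ):ℝ)/2^(j+1) ≤ t ∧ t < ((2*m+2:ℕ):ℝ)/2^(j+1)
  · obtain ⟨m, hm, h1, h2⟩ := hex
    exact Or.inr (dig_one hm h1 h2)
  · push_neg at hex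
    refine Or.inl (dig_zero (fun m hm hc => ?_))
    exact absurd hc.2 (not_lt.2 (hex m hm hc.1))

lemma dig_le_one (j : ℕ) (t : ℝ) : dig j t ≤ 1 := by
  rcases dig_dichot j t with h | h <;> rw [h] <;> norm_num

lemma rs_dig (P : TaggedPartition) {δ : ℝ} (hδ : ∀ i, len P i ≤ δ) (j : ℕ) :
    |(∑ i, len P i * dig j (P.tag i)) - 1/2| ≤ 2^(j+2) * δ := by
  have hδ0 : 0 ≤ δ := by
    have i : Fin P.n := ⟨0, n_pos P⟩
    exact le_trans (len_nonneg P i) (hδ i)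
  have swap : (∑ i, len P i * dig j (P.tag i))
      = ∑ m ∈ Finset.range (2^j),
          ((∑ i, len P i * hvs ((2*m+1:ℕ)/2^(j+1)) (P.tag i))
            - (∑ i, len P i * hvs ((2*m+2:ℕ)/2^(j+1)) (P.tag i))) := by
    unfold dig
    simp_rw [Finset.mul_sum, mul_sub]
    rw [Finset.sum_comm]
    exact Finset.sum_congr rfl (fun m _ => Finset.sum_sub_distrib _ _)
  rw [swap]
  have hval : ∑ m ∈ Finset.range (2^j),
      ((1 - ((2*m+1:ℕ):ℝ)/2^(j+1)) - (1 - ((2*m+2:ℕ):ℝ)/2^(j+1))) = 1/2 := by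
    have : ∀ m ∈ Finset.range (2^j),
        ((1 - ((2*m+1:ℕ):ℝ)/2^(j+1)) - (1 - ((2*m+2:ℕ):ℝ)/2^(j+1))) = 1/2^(j+1) := by
      intro m _
      push_cast
      field_simp
      ring
    rw [Finset.sum_congr rfl this, Finset.sum_const, Finset.card_range, nsmul_eq_mul]
    rw [pow_succ]
    push_cast
    field_simp
  have habs : ∀ m ∈ Finset.range (2^j),
      |((∑ i, len P i * hvs ((2*m+1:ℕ)/2^(j+1)) (P.tag i))
          - (∑ i, len P i * hvs ((2*m+2:ℕ)/2^(j+1)) (P.tag i)))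
        - ((1 - ((2*m+1:ℕ):ℝ)/2^(j+1)) - (1 - ((2*m+2:ℕ):ℝ)/2^(j+1)))| ≤ 4 * δ := by
    intro m hm
    rw [Finset.mem_range] at hm
    have hub1 : ((2*m+1:ℕ):ℝ) ≤ 2^(j+1) := by
      have : (2*m+1:ℕ) ≤ 2^(j+1) := by
        have := hm
        rw [pow_succ]
        omega
      exact_mod_cast this
    have hub2 : ((2*m+2:ℕ):ℝ) ≤ 2^(j+1) := by
      have : (2*m+2:ℕ) ≤ 2^(j+1) := by
        rw [pow_succ]
        omega
      exact_mod_cast this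
    have hmem1 : (0:ℝ) ≤ ((2*m+1:ℕ):ℝ)/2^(j+1) ∧ ((2*m+1:ℕ):ℝ)/2^(j+1) ≤ 1 := by
      constructor
      · positivity
      · rw [div_le_one (by positivity)]
        exact hub1
    have hmem2 : (0:ℝ) ≤ ((2*m+2:ℕ):ℝ)/2^(j+1) ∧ ((2*m+2:ℕ):ℝ)/2^(j+1) ≤ 1 := by
      constructor
      · positivity
      · rw [div_le_one (by positivity)]
        exact hub2
    have e1 := sigma_est P hmem1.1 hmem1.2 hδ
    have e2 := sigma_est P hmem2.1 hmem2.2 hδ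
    calc |((∑ i, len P i * hvs ((2*m+1:ℕ)/2^(j+1)) (P.tag i))
          - (∑ i, len P i * hvs ((2*m+2:ℕ)/2^(j+1)) (P.tag i)))
        - ((1 - ((2*m+1:ℕ):ℝ)/2^(j+1)) - (1 - ((2*m+2:ℕ):ℝ)/2^(j+1)))|
        = |((∑ i, len P i * hvs ((2*m+1:ℕ)/2^(j+1)) (P.tag i)) - (1 - ((2*m+1:ℕ):ℝ)/2^(j+1)))
          - ((∑ i, len P i * hvs ((2*m+2:ℕ)/2^(j+1)) (P.tag i)) - (1 - ((2*m+2:ℕ):ℝ)/2^(j+1)))| := by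
          ring_nf
    _ ≤ |(∑ i, len P i * hvs ((2*m+1:ℕ)/2^(j+1)) (P.tag i)) - (1 - ((2*m+1:ℕ):ℝ)/2^(j+1))|
        + |(∑ i, len P i * hvs ((2*m+2:ℕ)/2^(j+1)) (P.tag i)) - (1 - ((2*m+2:ℕ):ℝ)/2^(j+1))| :=
        abs_sub _ _
    _ ≤ 2*δ + 2*δ := add_le_add e1 e2
    _ = 4 * δ := by ring
  have hsplit : ∑ m ∈ Finset.range (2^j),
          (((∑ i, len P i * hvs ((2*m+1:ℕ)/2^(j+1)) (P.tag i))
            - (∑ i, len P i * hvs ((2*m+2:ℕ)/2^(j+1)) (P.tag i)))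
          - ((1 - ((2*m+1:ℕ):ℝ)/2^(j+1)) - (1 - ((2*m+2:ℕ):ℝ)/2^(j+1))))
      = (∑ m ∈ Finset.range (2^j),
        ((∑ i, len P i * hvs ((2*m+1:ℕ)/2^(j+1)) (P.tag i))
          - (∑ i, len P i * hvs ((2*m+2:ℕ)/2^(j+1)) (P.tag i)))) - 1/2 := by
    rw [Finset.sum_sub_distrib, hval]
  calc |(∑ m ∈ Finset.range (2^j),
        ((∑ i, len P i * hvs ((2*m+1:ℕ)/2^(j+1)) (P.tag i))
          - (∑ i, len P i * hvs ((2*m+2:ℕ)/2^(j+1)) (P.tag i)))) - 1/2|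
      = |∑ m ∈ Finset.range (2^j),
          (((∑ i, len P i * hvs ((2*m+1:ℕ)/2^(j+1)) (P.tag i))
            - (∑ i, len P i * hvs ((2*m+2:ℕ)/2^(j+1)) (P.tag i)))
          - ((1 - ((2*m+1:ℕ):ℝ)/2^(j+1)) - (1 - ((2*m+2:ℕ):ℝ)/2^(j+1))))| := by
        rw [hsplit]
    _ ≤ ∑ m ∈ Finset.range (2^j), (4*δ) := by
        refine le_trans (Finset.abs_sum_le_sum_abs _ _) (Finset.sum_le_sum habs)
    _ = 2^(j+2) * δ := by
        rw [Finset.sum_const, Finset.card_range, nsmul_eq_mul]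
        push_cast
        ring


lemma eqden (x j s : ℕ) : ((x:ℕ):ℝ)/2^(j+1) = ((x*2^s:ℕ):ℝ)/2^(j+s+1) := by
  have hp : (2:ℝ)^(j+s+1) = 2^(j+1) * 2^s := by
    rw [← pow_add]
    ring_nf
  push_cast
  rw [hp]
  field_simp

lemma cmp_le {x y j s : ℕ} : (((x:ℕ):ℝ)/2^(j+1) ≤ ((y:ℕ):ℝ)/2^(j+s+1)) ↔ x*2^s ≤ y := by
  rw [eqden x j s, div_le_div_iff_of_pos_right (by positivity : (0:ℝ) < 2^(j+s+1))]
  exact_mod_cast Iff.rfl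

lemma cmp_lt {x y j s : ℕ} : (((x:ℕ):ℝ)/2^(j+s+1) < ((y:ℕ):ℝ)/2^(j+1)) ↔ x < y*2^s := by
  rw [eqden y j s, div_lt_div_iff_of_pos_right (by positivity : (0:ℝ) < 2^(j+s+1))]
  exact_mod_cast Iff.rfl

lemma hvs_cell {x m' j s : ℕ} {t : ℝ}
    (h1 : ((2*m'+1:ℕ):ℝ)/2^(j+s+1) ≤ t) (h2 : t < ((2*m'+2:ℕ):ℝ)/2^(j+s+1)) :
    hvs (((x:ℕ):ℝ)/2^(j+1)) t = hvs (((x:ℕ):ℝ)/2^(j+1)) (((2*m'+1:ℕ):ℝ)/2^(j+s+1)) := by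
  unfold hvs
  by_cases hle : ((x:ℕ):ℝ)/2^(j+1) ≤ ((2*m'+1:ℕ):ℝ)/2^(j+s+1)
  · rw [if_pos (le_trans hle h1), if_pos hle]
  · rw [if_neg hle, if_neg ?_]
    intro hxt
    rw [cmp_le] at hle
    push_neg at hle
    have hge : 2*m'+2 ≤ x*2^s := hle
    have hbx : ((2*m'+2:ℕ):ℝ)/2^(j+s+1) ≤ ((x:ℕ):ℝ)/2^(j+1) := by
      rw [eqden x j s]
      exact dd_le hge
    linarith

lemma cell_const {m' j s : ℕ} {t : ℝ}
    (h1 : ((2*m'+1:ℕ):ℝ)/2^(j+s+1) ≤ t) (h2 : t < ((2*m'+2:ℕ):ℝ)/2^(j+s+1)) :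
    dig j t = dig j (((2*m'+1:ℕ):ℝ)/2^(j+s+1)) := by
  unfold dig
  refine Finset.sum_congr rfl (fun m _ => ?_)
  rw [hvs_cell h1 h2, hvs_cell h1 h2]

lemma dig_center {j s q v : ℕ} (hq : q < 2^j) (hv : v < 2^(s+1)) :
    dig j (((2*(2^(s+1)*q+v)+1 : ℕ):ℝ)/2^(j+(s+1)+1))
      = if 2^s ≤ v then 1 else 0 := by
  have hM : 0 < 2^s := by positivity
  by_cases hcond : 2^s ≤ v
  · rw [if_pos hcond]
    refine dig_one hq ?_ ?_
    · rw [cmp_le]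
      have : (2*q+1)*2^(s+1) = 2*(2^(s+1)*q) + 2^(s+1) := by ring
      rw [this]
      have h2 : 2^(s+1) = 2*2^s := by ring
      omega
    · rw [cmp_lt]
      have : (2*q+2)*2^(s+1) = 2*(2^(s+1)*q) + 2*2^(s+1) := by ring
      rw [this]
      have h2 : 2^(s+1) = 2*2^s := by ring
      omega
  · rw [if_neg hcond]
    push_neg at hcond
    refine dig_zero (fun m hm hc => ?_)
    obtain ⟨hA, hB⟩ := hc
    rw [cmp_le] at hA
    rw [cmp_lt] at hB
    -- hA : (2m+1)*2^(s+1) ≤ 2*(2^(s+1) q + v) + 1, hB : ... < (2m+2)*2^(s+1)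
    set K := 2^(s+1) with hK
    have hKpos : 0 < K := by positivity
    have h2vK : 2*v+1 < K := by
      have : K = 2*2^s := by rw [hK]; ring
      omega
    have hmq : m < q := by
      have h1' : (2*m+1)*K < (2*q+1)*K := by
        calc (2*m+1)*K ≤ 2*(K*q+v)+1 := hA
        _ = 2*(K*q) + (2*v+1) := by ring
        _ < 2*(K*q) + K := by omega
        _ = (2*q+1)*K := by ring
      have := (Nat.mul_lt_mul_right hKpos).1 h1'
      omega
    have hqm : q ≤ m := by
      have h2' : (2*q)*K < (2*m+2)*K := by
        calc (2*q)*K = 2*(K*q) := by ring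
        _ ≤ 2*(K*q+v)+1 := by omega
        _ < (2*m+2)*K := hB
      have := (Nat.mul_lt_mul_right hKpos).1 h2'
      omega
    omega

/-- counting: number of `m' < a*b` with `c ≤ m' % b` equals `a * (b - c)` -/
lemma filter_mod_card (b c : ℕ) (hcb : c ≤ b) :
    ∀ a, ((Finset.range (a*b)).filter (fun m => c ≤ m % b)).card = a * (b - c) := by
  intro a
  induction a with
  | zero => simp
  | succ a ih =>
    have hr : (a+1)*b = a*b + b := by ring
    rw [hr, Finset.range_add, Finset.filter_union, Finset.card_union_of_disjoint, ih]
    · rw [Finset.filter_map, Finset.card_map]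
      have : (Finset.range b).filter ((fun m => c ≤ m % b) ∘ (addLeftEmbedding (a*b))) 
          = (Finset.range b).filter (fun v => c ≤ v) := by
        refine Finset.filter_congr (fun v hv => ?_)
        rw [Finset.mem_range] at hv
        simp only [Function.comp, addLeftEmbedding_apply]
        rw [Nat.mul_comm a b, Nat.add_comm, Nat.add_mul_mod_self_left, Nat.mod_eq_of_lt hv]
      rw [this]
      have : (Finset.range b).filter (fun v => c ≤ v) = Finset.Ico c b := by
        ext v
        simp [Finset.mem_filter, Finset.mem_range, Finset.mem_Ico, and_comm]
      rw [this, Nat.card_Ico]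
      ring
    · refine Finset.disjoint_left.2 (fun m hm1 hm2 => ?_)
      rw [Finset.mem_filter, Finset.mem_range] at hm1
      rw [Finset.mem_filter, Finset.mem_map] at hm2
      obtain ⟨⟨v, hv, hveq⟩, -⟩ := hm2
      rw [Finset.mem_range] at hv
      rw [addLeftEmbedding_apply] at hveq
      omega


lemma rs_prod (P : TaggedPartition) {δ : ℝ} (hδ : ∀ i, len P i ≤ δ) (j s : ℕ) :
    |(∑ i, len P i * (dig j (P.tag i) * dig (j+s+1) (P.tag i))) - 1/4|
      ≤ 2^(j+s+3) * δ := by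
  have hδ0 : 0 ≤ δ := by
    have i : Fin P.n := ⟨0, n_pos P⟩
    exact le_trans (len_nonneg P i) (hδ i)
  set l := j + s + 1 with hl
  set ww : ℕ → ℝ := fun m' => if 2^s ≤ m' % 2^(s+1) then (1:ℝ) else 0 with hww
  have hw0 : ∀ m', 0 ≤ ww m' := by
    intro m'; rw [hww]; dsimp only; split <;> norm_num
  have hw1 : ∀ m', ww m' ≤ 1 := by
    intro m'; rw [hww]; dsimp only; split <;> norm_num
  have hrep : ∀ t : ℝ, dig j t * dig l t
      = ∑ m' ∈ Finset.range (2^l),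
          ww m' * (hvs (((2*m'+1:ℕ):ℝ)/2^(j+(s+1)+1)) t
                    - hvs (((2*m'+2:ℕ):ℝ)/2^(j+(s+1)+1)) t) := by
    intro t
    have hE : l + 1 = j + (s+1) + 1 := by omega
    have hdig : dig l t = ∑ m' ∈ Finset.range (2^l),
        (hvs (((2*m'+1:ℕ):ℝ)/2^(j+(s+1)+1)) t - hvs (((2*m'+2:ℕ):ℝ)/2^(j+(s+1)+1)) t) := by
      unfold dig
      rw [hE]
    rw [hdig, Finset.mul_sum]
    refine Finset.sum_congr rfl (fun m' hm' => ?_)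
    rw [Finset.mem_range] at hm'
    by_cases ha : ((2*m'+1:ℕ):ℝ)/2^(j+(s+1)+1) ≤ t
    · by_cases hb : ((2*m'+2:ℕ):ℝ)/2^(j+(s+1)+1) ≤ t
      · unfold hvs
        rw [if_pos ha, if_pos hb]
        ring
      · have htlt : t < ((2*m'+2:ℕ):ℝ)/2^(j+(s+1)+1) := not_le.1 hb
        have hcc := cell_const (j := j) (s := s+1) (m' := m') ha htlt
        have hqv : 2^(s+1) * (m' / 2^(s+1)) + m' % 2^(s+1) = m' := Nat.div_add_mod _ _
        have hq : m' / 2^(s+1) < 2^j := by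
          apply Nat.div_lt_of_lt_mul
          calc m' < 2^l := hm'
          _ = 2^(s+1) * 2^j := by rw [hl, ← pow_add]; congr 1; omega
        have hv : m' % 2^(s+1) < 2^(s+1) := Nat.mod_lt _ (by positivity)
        have hc := dig_center (j := j) (s := s) hq hv
        rw [hqv] at hc
        rw [hcc, hc]
    · have hb : ¬ (((2*m'+2:ℕ):ℝ)/2^(j+(s+1)+1) ≤ t) :=
        fun hb => ha (le_trans (dd_le (by omega)) hb)
      unfold hvs
      rw [if_neg ha, if_neg hb]
      ring
  have swap : (∑ i, len P i * (dig j (P.tag i) * dig l (P.tag i)))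
      = ∑ m' ∈ Finset.range (2^l),
          ww m' * ((∑ i, len P i * hvs (((2*m'+1:ℕ):ℝ)/2^(j+(s+1)+1)) (P.tag i))
            - (∑ i, len P i * hvs (((2*m'+2:ℕ):ℝ)/2^(j+(s+1)+1)) (P.tag i))) := by
    have h1 : ∀ i : Fin P.n, len P i * (dig j (P.tag i) * dig l (P.tag i))
        = ∑ m' ∈ Finset.range (2^l),
            ww m' * (len P i * hvs (((2*m'+1:ℕ):ℝ)/2^(j+(s+1)+1)) (P.tag i)
              - len P i * hvs (((2*m'+2:ℕ):ℝ)/2^(j+(s+1)+1)) (P.tag i)) := by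
      intro i
      rw [hrep (P.tag i), Finset.mul_sum]
      refine Finset.sum_congr rfl (fun m' _ => ?_)
      ring
    rw [Finset.sum_congr rfl (fun i _ => h1 i), Finset.sum_comm]
    refine Finset.sum_congr rfl (fun m' _ => ?_)
    rw [← Finset.mul_sum, Finset.sum_sub_distrib]
  rw [swap]
  -- the exact value of the weighted sum of cell masses
  have hcount : ∑ m' ∈ Finset.range (2^l), ww m' = 2^(j+s) := by
    rw [hww]
    rw [Finset.sum_boole]
    have hrange : (2:ℕ)^l = 2^j * 2^(s+1) := by
      rw [hl]
      exact pow_add 2 j (s+1)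
    rw [hrange, filter_mod_card (2^(s+1)) (2^s)
      (Nat.pow_le_pow_right (by norm_num) (Nat.le_succ s)) (2^j)]
    have : 2^(s+1) - 2^s = 2^s := by
      have : (2:ℕ)^(s+1) = 2*2^s := by ring
      omega
    rw [this, ← pow_add]
    norm_cast
  have hval : ∑ m' ∈ Finset.range (2^l),
      ww m' * ((1 - ((2*m'+1:ℕ):ℝ)/2^(j+(s+1)+1)) - (1 - ((2*m'+2:ℕ):ℝ)/2^(j+(s+1)+1))) = 1/4 := by
    have hterm : ∀ m' ∈ Finset.range (2^l),
        ww m' * ((1 - ((2*m'+1:ℕ):ℝ)/2^(j+(s+1)+1)) - (1 - ((2*m'+2:ℕ):ℝ)/2^(j+(s+1)+1)))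
          = ww m' * (1/2^(j+(s+1)+1)) := by
      intro m' _
      have h1 : ((2*m'+2:ℕ):ℝ) - ((2*m'+1:ℕ):ℝ) = 1 := by push_cast; ring
      have h2 : (1 - ((2*m'+1:ℕ):ℝ)/2^(j+(s+1)+1)) - (1 - ((2*m'+2:ℕ):ℝ)/2^(j+(s+1)+1))
           = (((2*m'+2:ℕ):ℝ) - ((2*m'+1:ℕ):ℝ))/2^(j+(s+1)+1) := by ring
      rw [h2, h1]
    rw [Finset.sum_congr rfl hterm, ← Finset.sum_mul, hcount]
    have h4 : (2:ℝ)^(j+(s+1)+1) = 2^(j+s) * 4 := by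
      rw [show j+(s+1)+1 = (j+s)+2 by omega, pow_add]
      norm_num
    rw [h4, mul_one_div]
    rw [div_eq_div_iff (by positivity : (0:ℝ) < 2^(j+s)*4).ne' (by norm_num : (4:ℝ) ≠ 0)]
    ring
  have habs : ∀ m' ∈ Finset.range (2^l),
      |ww m' * ((∑ i, len P i * hvs (((2*m'+1:ℕ):ℝ)/2^(j+(s+1)+1)) (P.tag i))
            - (∑ i, len P i * hvs (((2*m'+2:ℕ):ℝ)/2^(j+(s+1)+1)) (P.tag i)))
        - ww m' * ((1 - ((2*m'+1:ℕ):ℝ)/2^(j+(s+1)+1)) - (1 - ((2*m'+2:ℕ):ℝ)/2^(j+(s+1)+1)))|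
        ≤ 4 * δ := by
    intro m' hm'
    rw [Finset.mem_range] at hm'
    have hub1 : ((2*m'+1:ℕ):ℝ) ≤ 2^(j+(s+1)+1) := by
      have hn : (2*m'+1:ℕ) ≤ 2^(j+(s+1)+1) := by
        have h2 : (2:ℕ)^(j+(s+1)+1) = 2^l * 2 := by
          rw [hl, ← pow_succ]
          ring
        omega
      exact_mod_cast hn
    have hub2 : ((2*m'+2:ℕ):ℝ) ≤ 2^(j+(s+1)+1) := by
      have hn : (2*m'+2:ℕ) ≤ 2^(j+(s+1)+1) := by
        have h2 : (2:ℕ)^(j+(s+1)+1) = 2^l * 2 := by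
          rw [hl, ← pow_succ]
          ring
        omega
      exact_mod_cast hn
    have e1 := sigma_est P (θ := ((2*m'+1:ℕ):ℝ)/2^(j+(s+1)+1)) (by positivity)
      (by rw [div_le_one (by positivity)]; exact hub1) hδ
    have e2 := sigma_est P (θ := ((2*m'+2:ℕ):ℝ)/2^(j+(s+1)+1)) (by positivity)
      (by rw [div_le_one (by positivity)]; exact hub2) hδ
    rw [← mul_sub, abs_mul, abs_of_nonneg (hw0 m')]
    calc ww m' * |((∑ i, len P i * hvs (((2*m'+1:ℕ):ℝ)/2^(j+(s+1)+1)) (P.tag i))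
            - (∑ i, len P i * hvs (((2*m'+2:ℕ):ℝ)/2^(j+(s+1)+1)) (P.tag i)))
          - ((1 - ((2*m'+1:ℕ):ℝ)/2^(j+(s+1)+1)) - (1 - ((2*m'+2:ℕ):ℝ)/2^(j+(s+1)+1)))|
        ≤ 1 * |((∑ i, len P i * hvs (((2*m'+1:ℕ):ℝ)/2^(j+(s+1)+1)) (P.tag i))
            - (∑ i, len P i * hvs (((2*m'+2:ℕ):ℝ)/2^(j+(s+1)+1)) (P.tag i)))
          - ((1 - ((2*m'+1:ℕ):ℝ)/2^(j+(s+1)+1)) - (1 - ((2*m'+2:ℕ):ℝ)/2^(j+(s+1)+1)))| := by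
          apply mul_le_mul_of_nonneg_right (hw1 m') (abs_nonneg _)
    _ = |((∑ i, len P i * hvs (((2*m'+1:ℕ):ℝ)/2^(j+(s+1)+1)) (P.tag i))
            - (1 - ((2*m'+1:ℕ):ℝ)/2^(j+(s+1)+1)))
          - ((∑ i, len P i * hvs (((2*m'+2:ℕ):ℝ)/2^(j+(s+1)+1)) (P.tag i))
            - (1 - ((2*m'+2:ℕ):ℝ)/2^(j+(s+1)+1)))| := by
          rw [one_mul]
          ring_nf
    _ ≤ |(∑ i, len P i * hvs (((2*m'+1:ℕ):ℝ)/2^(j+(s+1)+1)) (P.tag i))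
            - (1 - ((2*m'+1:ℕ):ℝ)/2^(j+(s+1)+1))|
        + |(∑ i, len P i * hvs (((2*m'+2:ℕ):ℝ)/2^(j+(s+1)+1)) (P.tag i))
            - (1 - ((2*m'+2:ℕ):ℝ)/2^(j+(s+1)+1))| := abs_sub _ _
    _ ≤ 2*δ + 2*δ := add_le_add e1 e2
    _ = 4 * δ := by ring
  have hsplit : ∑ m' ∈ Finset.range (2^l),
      (ww m' * ((∑ i, len P i * hvs (((2*m'+1:ℕ):ℝ)/2^(j+(s+1)+1)) (P.tag i))
            - (∑ i, len P i * hvs (((2*m'+2:ℕ):ℝ)/2^(j+(s+1)+1)) (P.tag i)))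
        - ww m' * ((1 - ((2*m'+1:ℕ):ℝ)/2^(j+(s+1)+1)) - (1 - ((2*m'+2:ℕ):ℝ)/2^(j+(s+1)+1))))
      = (∑ m' ∈ Finset.range (2^l),
          ww m' * ((∑ i, len P i * hvs (((2*m'+1:ℕ):ℝ)/2^(j+(s+1)+1)) (P.tag i))
            - (∑ i, len P i * hvs (((2*m'+2:ℕ):ℝ)/2^(j+(s+1)+1)) (P.tag i)))) - 1/4 := by
    rw [Finset.sum_sub_distrib, hval]
  calc |(∑ m' ∈ Finset.range (2^l),
          ww m' * ((∑ i, len P i * hvs (((2*m'+1:ℕ):ℝ)/2^(j+(s+1)+1)) (P.tag i))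
            - (∑ i, len P i * hvs (((2*m'+2:ℕ):ℝ)/2^(j+(s+1)+1)) (P.tag i)))) - 1/4|
      = |∑ m' ∈ Finset.range (2^l),
          (ww m' * ((∑ i, len P i * hvs (((2*m'+1:ℕ):ℝ)/2^(j+(s+1)+1)) (P.tag i))
            - (∑ i, len P i * hvs (((2*m'+2:ℕ):ℝ)/2^(j+(s+1)+1)) (P.tag i)))
          - ww m' * ((1 - ((2*m'+1:ℕ):ℝ)/2^(j+(s+1)+1)) - (1 - ((2*m'+2:ℕ):ℝ)/2^(j+(s+1)+1))))| := by
        rw [hsplit]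
    _ ≤ ∑ m' ∈ Finset.range (2^l), (4*δ) :=
        le_trans (Finset.abs_sum_le_sum_abs _ _) (Finset.sum_le_sum habs)
    _ = 2^(j+s+3) * δ := by
        rw [Finset.sum_const, Finset.card_range, nsmul_eq_mul]
        push_cast
        rw [hl]
        ring

/-- a sum of selections belongs to the Minkowski sum -/
lemma mem_finsetSum_sets {X : Type*} [AddCommGroup X] {ι : Type*} (s : Finset ι) (S : ι → Set X)
    (v : ι → X) (hv : ∀ i ∈ s, v i ∈ S i) : (∑ i ∈ s, v i) ∈ ∑ i ∈ s, S i := by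
  classical
  induction s using Finset.induction_on with
  | empty => simp
  | insert a s' hx ih =>
    rw [Finset.sum_insert hx, Finset.sum_insert hx]
    exact Set.add_mem_add (hv a (Finset.mem_insert_self a s'))
      (ih (fun i hi => hv i (Finset.mem_insert_of_mem hi)))

/-- linear upper bounds pass to Minkowski sums -/
lemma sum_sets_le {X : Type*} [NormedAddCommGroup X] [NormedSpace ℝ X] {ι : Type*}
    (s : Finset ι) (S : ι → Set X) (φ : X →L[ℝ] ℝ) (c : ι → ℝ)
    (h : ∀ i ∈ s, ∀ y ∈ S i, φ y ≤ c i) :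
    ∀ z ∈ ∑ i ∈ s, S i, φ z ≤ ∑ i ∈ s, c i := by
  classical
  induction s using Finset.induction_on with
  | empty =>
    intro z hz
    simp only [Finset.sum_empty] at hz ⊢
    have : z = 0 := by simpa using hz
    simp [this]
  | insert a s' hx ih =>
    intro z hz
    rw [Finset.sum_insert hx] at hz
    rw [Finset.sum_insert hx]
    obtain ⟨y, hy, w, hw, rfl⟩ := Set.mem_add.1 hz
    have h1 := h a (Finset.mem_insert_self a s') y hy
    have h2 := ih (fun i hi => h i (Finset.mem_insert_of_mem hi)) w hw
    rw [map_add]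
    linarith

end RSAux

open RSAux

/-- If a real Banach space has a biorthogonal system `{x_i}, {f_i}` bounded by `C`
(`f_i(x_j) = δ_{ij}`, `‖x_i‖·‖f_i‖ ≤ C`), then there is a bounded convex-valued
multifunction `F` on `[0,1]` with `I(F) = ∅`. -/
theorem exists_boundedConvexMultifunction_limitSets_empty_of_biorthogonal
    {X : Type*} [NormedAddCommGroup X] [NormedSpace ℝ X] [CompleteSpace X]
    (C : ℝ) (x : ℕ → X) (f : ℕ → X →L[ℝ] ℝ)
    (hbi : ∀ i j, f i (x j) = if i = j then 1 else 0)
    (hbd : ∀ i, ‖x i‖ * ‖f i‖ ≤ C) :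
    ∃ F : ℝ → Set X,
      (∀ t ∈ Set.Icc (0 : ℝ) 1, (F t).Nonempty) ∧
      (∀ t ∈ Set.Icc (0 : ℝ) 1, Convex ℝ (F t)) ∧
      (∃ M : ℝ, ∀ t ∈ Set.Icc (0 : ℝ) 1, ∀ a ∈ F t, ‖a‖ ≤ M) ∧
      limitSets F = ∅ := by
  classical
  -- basic facts about the biorthogonal system
  have hxne : ∀ r, x r ≠ 0 := by
    intro r h
    have := hbi r r
    rw [h, map_zero] at this
    simp at this
  set e : ℕ → X := fun r => ‖x r‖⁻¹ • x r with he
  set g : ℕ → X →L[ℝ] ℝ := fun r => ‖x r‖ • f r with hg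
  have henorm : ∀ r, ‖e r‖ = 1 := fun r => norm_smul_inv_norm (hxne r)
  have hge : ∀ r r', g r (e r') = if r = r' then 1 else 0 := by
    intro r r'
    rw [hg, he]
    simp only [ContinuousLinearMap.smul_apply, map_smul, smul_eq_mul]
    rw [hbi r r']
    rcases eq_or_ne r r' with hrr | hrr
    · subst hrr
      rw [if_pos rfl, mul_one]
      exact inv_mul_cancel₀ (norm_ne_zero_iff.2 (hxne r))
    · rw [if_neg hrr]
      ring
  have hgnorm : ∀ r, ‖g r‖ ≤ C := by
    intro r
    calc ‖g r‖ ≤ ‖(‖x r‖)‖ * ‖f r‖ := by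
          rw [hg]
          exact ContinuousLinearMap.opNorm_smul_le _ _
    _ = ‖x r‖ * ‖f r‖ := by rw [Real.norm_eq_abs, abs_of_nonneg (norm_nonneg _)]
    _ ≤ C := hbd r
  have hC1 : 1 ≤ C := by
    have h1 : (1:ℝ) = f 0 (x 0) := by rw [hbi 0 0]; simp
    calc (1:ℝ) = f 0 (x 0) := h1
    _ ≤ ‖f 0 (x 0)‖ := le_abs_self _
    _ ≤ ‖f 0‖ * ‖x 0‖ := (f 0).le_opNorm (x 0)
    _ = ‖x 0‖ * ‖f 0‖ := by ring
    _ ≤ C := hbd 0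
  have hC0 : 0 < C := lt_of_lt_of_le one_pos hC1
  -- the multifunction
  set V : ℝ → Set X := fun t => insert (0:X) {y | ∃ r, dig r t = 1 ∧ y = e r} with hV
  set F : ℝ → Set X := fun t => convexHull ℝ (V t) with hF
  have h0V : ∀ t, (0:X) ∈ V t := fun t => Set.mem_insert _ _
  have h0F : ∀ t, (0:X) ∈ F t := fun t => subset_convexHull ℝ (V t) (h0V t)
  have heF : ∀ t r, dig r t = 1 → e r ∈ F t := by
    intro t r hr
    exact subset_convexHull ℝ (V t) (Set.mem_insert_iff.2 (Or.inr ⟨r, hr, rfl⟩))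
  -- upper bounds on hull from vertex bounds
  have hFup : ∀ (t : ℝ) (φ : X →L[ℝ] ℝ) (c : ℝ), 0 ≤ c → (∀ r, dig r t = 1 → φ (e r) ≤ c) →
      ∀ y ∈ F t, φ y ≤ c := by
    intro t φ c hc hv y hy
    have hsub : V t ⊆ {y | φ y ≤ c} := by
      intro y hy
      rcases Set.mem_insert_iff.1 hy with rfl | ⟨r, hr, rfl⟩
      · simpa using hc
      · exact hv r hr
    exact convexHull_min hsub
      (convex_halfSpace_le ⟨φ.map_add, fun r x => φ.map_smul r x⟩ c) hy
  -- bound on msum from pointwise bounds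
  have hSup : ∀ (P : TaggedPartition) (φ : X →L[ℝ] ℝ) (c : Fin P.n → ℝ),
      (∀ i, ∀ y ∈ F (P.tag i), φ y ≤ c i) →
      ∀ z ∈ msum F P, φ z ≤ ∑ i, len P i * c i := by
    intro P φ c hc z hz
    refine sum_sets_le Finset.univ _ φ (fun i => len P i * c i) ?_ z hz
    intro i _ y hy
    obtain ⟨w, hw, rfl⟩ := Set.mem_smul_set.1 hy
    rw [map_smul, smul_eq_mul]
    exact mul_le_mul_of_nonneg_left (hc i w hw) (len_nonneg P i)
  have hSel : ∀ (P : TaggedPartition) (w : Fin P.n → X),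
      (∀ i, w i ∈ F (P.tag i)) → (∑ i, len P i • w i) ∈ msum F P := by
    intro P w hw
    exact mem_finsetSum_sets Finset.univ _ _
      (fun i _ => Set.smul_mem_smul_set (hw i))
  refine ⟨F, fun t _ => ⟨0, h0F t⟩, fun t _ => convex_convexHull ℝ (V t), ⟨1, ?_⟩, ?_⟩
  · -- boundedness
    intro t _ a ha
    have hsub : V t ⊆ closedBall (0:X) 1 := by
      intro y hy
      rcases Set.mem_insert_iff.1 hy with rfl | ⟨r, _, rfl⟩
      · simp
      · simp [henorm r]
    have := convexHull_min hsub (convex_closedBall (0:X) 1) ha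
    simpa [dist_zero_right] using this
  -- the main part : limitSets F = ∅
  rw [Set.eq_empty_iff_forall_notMem]
  intro A hA
  obtain ⟨hAne, -, P, hmesh, hdist⟩ := hA
  set ε : ℝ := 1/(100*C) with hε
  have hεpos : 0 < ε := by rw [hε]; positivity
  have hCε : C * ε = 1/100 := by rw [hε]; field_simp
  have hε100 : ε ≤ 1/100 := by
    rw [hε]
    rw [div_le_div_iff₀ (by positivity) (by norm_num)]
    nlinarith
  have hpick : ∀ η : ℝ, 0 < η → ∃ k, (P k).mesh < η ∧
      EMetric.hausdorffEdist (msum F (P k)) A < ENNReal.ofReal ε := by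
    intro η hη
    have h1 := hmesh.eventually (gt_mem_nhds hη)
    have hofε : (0:ENNReal) < ENNReal.ofReal ε := by
      simp only [ENNReal.ofReal_pos]
      exact hεpos
    have h2 := hdist.eventually (gt_mem_nhds hofε)
    exact (h1.and h2).exists
  -- transfers across the Hausdorff distance
  have trans1 : ∀ (S : Set X), EMetric.hausdorffEdist S A < ENNReal.ofReal ε →
      ∀ z ∈ S, ∀ (φ : X →L[ℝ] ℝ) (Cb : ℝ), ‖φ‖ ≤ Cb →
      ∃ a ∈ A, φ z - Cb * ε ≤ φ a := by
    intro S hS z hz φ Cb hCb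
    obtain ⟨a, haA, hlt⟩ := EMetric.exists_edist_lt_of_hausdorffEdist_lt hz hS
    refine ⟨a, haA, ?_⟩
    have hd : dist z a < ε := edist_lt_ofReal.1 hlt
    have h1 : φ z - φ a ≤ ‖φ‖ * ‖z - a‖ := by
      calc φ z - φ a = φ (z - a) := by rw [map_sub]
      _ ≤ ‖φ (z-a)‖ := le_abs_self _
      _ ≤ ‖φ‖ * ‖z - a‖ := φ.le_opNorm _
    have h2 : ‖φ‖ * ‖z - a‖ ≤ Cb * ε := by
      apply mul_le_mul hCb (by rw [← dist_eq_norm]; exact hd.le) (norm_nonneg _)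
        (le_trans (norm_nonneg _) hCb)
    linarith
  have trans2 : ∀ (S : Set X), EMetric.hausdorffEdist S A < ENNReal.ofReal ε →
      ∀ a ∈ A, ∀ (φ : X →L[ℝ] ℝ) (Cb : ℝ), ‖φ‖ ≤ Cb →
      ∃ z ∈ S, φ a - Cb * ε ≤ φ z := by
    intro S hS a haA φ Cb hCb
    rw [EMetric.hausdorffEdist, Metric.hausdorffEDist_comm] at hS
    obtain ⟨z, hzS, hlt⟩ := EMetric.exists_edist_lt_of_hausdorffEdist_lt haA hS
    refine ⟨z, hzS, ?_⟩
    have hd : dist a z < ε := edist_lt_ofReal.1 hlt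
    have h1 : φ a - φ z ≤ ‖φ‖ * ‖a - z‖ := by
      calc φ a - φ z = φ (a - z) := by rw [map_sub]
      _ ≤ ‖φ (a-z)‖ := le_abs_self _
      _ ≤ ‖φ‖ * ‖a - z‖ := φ.le_opNorm _
    have h2 : ‖φ‖ * ‖a - z‖ ≤ Cb * ε := by
      apply mul_le_mul hCb (by rw [← dist_eq_norm]; exact hd.le) (norm_nonneg _)
        (le_trans (norm_nonneg _) hCb)
    linarith
  -- choose the base partition k0 and the pigeonhole pair
  obtain ⟨k0, -, hd0⟩ := hpick 1 one_pos
  obtain ⟨j0, l0, hne0, hcol⟩ := Finite.exists_ne_map_eq_of_infinite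
    (fun r : ℕ => fun i : Fin (P k0).n => decide (dig r ((P k0).tag i) = 1))
  have hdd0 : ∀ i, dig j0 ((P k0).tag i) = dig l0 ((P k0).tag i) := by
    intro i
    have hiff : dig j0 ((P k0).tag i) = 1 ↔ dig l0 ((P k0).tag i) = 1 :=
      decide_eq_decide.1 (congrFun hcol i)
    rcases dig_dichot j0 ((P k0).tag i) with h1|h1 <;>
      rcases dig_dichot l0 ((P k0).tag i) with h2|h2 <;>
      rw [h1, h2] <;> rw [h1, h2] at hiff <;> first
        | rfl
        | (exfalso; norm_num at hiff)
  obtain ⟨j, l, hjl, hdd⟩ : ∃ j l, j < l ∧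
      ∀ i, dig j ((P k0).tag i) = dig l ((P k0).tag i) := by
    rcases lt_or_gt_of_ne hne0 with hlt|hlt
    · exact ⟨j0, l0, hlt, hdd0⟩
    · exact ⟨l0, j0, hlt, fun i => (hdd0 i).symm⟩
  obtain ⟨s, rfl⟩ : ∃ s, l = j + s + 1 := ⟨l - j - 1, by omega⟩
  set l := j + s + 1 with hl
  set φP : X →L[ℝ] ℝ := g j + g l with hφP
  have hφPnorm : ‖φP‖ ≤ 2*C := by
    rw [hφP]
    calc ‖g j + g l‖ ≤ ‖g j‖ + ‖g l‖ := norm_add_le _ _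
    _ ≤ 2*C := by have := hgnorm j; have := hgnorm l; linarith
  have hjnel : j ≠ l := by omega
  -- value of φP on vertices
  have hφPe : ∀ r, φP (e r) = (if j = r then 1 else 0) + (if l = r then 1 else 0) := by
    intro r
    rw [hφP]
    simp only [ContinuousLinearMap.add_apply]
    rw [hge j r, hge l r]
  set W : ℝ := ∑ i, len (P k0) i * dig j ((P k0).tag i) with hW
  -- upper bound on S0
  have hU0 : ∀ z ∈ msum F (P k0), φP z ≤ W := by
    intro z hz
    refine hSup (P k0) φP (fun i => dig j ((P k0).tag i)) ?_ z hz
    intro i y hy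
    refine hFup _ φP _ (dig_nonneg _ _) ?_ y hy
    intro r hr
    rw [hφPe r]
    by_cases h1 : j = r
    · rw [if_pos h1, if_neg (by omega)]
      rw [h1]
      rw [hr]
      norm_num
    · by_cases h2 : l = r
      · rw [if_neg h1, if_pos h2]
        have : dig j ((P k0).tag i) = 1 := by rw [hdd i, h2, hr]
        rw [this]
        norm_num
      · rw [if_neg h1, if_neg h2]
        simpa using dig_nonneg j ((P k0).tag i)
  -- the point x1 in S0 with (g j) x1 = W
  have hx1 : ∃ z ∈ msum F (P k0), g j z = W := by
    refine ⟨∑ i, len (P k0) i • (dig j ((P k0).tag i) • e j), ?_, ?_⟩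
    · refine hSel (P k0) _ (fun i => ?_)
      rcases dig_dichot j ((P k0).tag i) with h1|h1
      · rw [h1, zero_smul]
        exact h0F _
      · rw [h1, one_smul]
        exact heF _ _ h1
    · rw [map_sum]
      rw [hW]
      refine Finset.sum_congr rfl (fun i _ => ?_)
      rw [map_smul, map_smul, smul_eq_mul, smul_eq_mul]
      have : g j (e j) = 1 := by rw [hge j j, if_pos rfl]
      rw [this]
      ring
  -- k1 : fine scale for the single digit j
  obtain ⟨k1, hm1, hd1⟩ := hpick (ε / 2^(j+2)) (by positivity)
  have hU1 : ∀ z ∈ msum F (P k1), g j z ≤ 1/2 + ε := by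
    intro z hz
    have hb : ∀ i, ∀ y ∈ F ((P k1).tag i), g j y ≤ dig j ((P k1).tag i) := by
      intro i y hy
      refine hFup _ (g j) _ (dig_nonneg _ _) ?_ y hy
      intro r hr
      rw [hge j r]
      by_cases h1 : j = r
      · rw [if_pos h1, h1, hr]
      · rw [if_neg h1]
        exact dig_nonneg _ _
    have h1 := hSup (P k1) (g j) _ hb z hz
    have h2 := rs_dig (P k1) (fun i => len_le_mesh (P k1) i) j
    have h3 : (2:ℝ)^(j+2) * (P k1).mesh ≤ ε := by
      have := hm1.le
      calc (2:ℝ)^(j+2) * (P k1).mesh ≤ 2^(j+2) * (ε / 2^(j+2)) := by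
            apply mul_le_mul_of_nonneg_left this (by positivity)
      _ = ε := by field_simp
    have h4 : (∑ i, len (P k1) i * dig j ((P k1).tag i)) ≤ 1/2 + ε := by
      have := abs_le.1 h2
      linarith [this.2]
    linarith
  -- k2 : fine scale for the pair
  obtain ⟨k2, hm2, hd2⟩ := hpick (ε / 2^(j+s+4)) (by positivity)
  have hmesh2 : ∀ r : ℕ, r ≤ j+s+4 → (2:ℝ)^r * (P k2).mesh ≤ ε := by
    intro r hr
    calc (2:ℝ)^r * (P k2).mesh ≤ 2^(j+s+4) * (P k2).mesh := by
          apply mul_le_mul_of_nonneg_right _ (mesh_nonneg _)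
          exact pow_le_pow_right₀ (by norm_num) hr
    _ ≤ 2^(j+s+4) * (ε / 2^(j+s+4)) := by
          apply mul_le_mul_of_nonneg_left hm2.le (by positivity)
    _ = ε := by field_simp
  -- lower bound: a point z2 in S2 with φP z2 ≥ 3/4 - 3ε
  have hx2 : ∃ z ∈ msum F (P k2), 3/4 - 3*ε ≤ φP z := by
    set w : Fin (P k2).n → X := fun i =>
      if dig j ((P k2).tag i) = 1 then e j
      else (if dig l ((P k2).tag i) = 1 then e l else 0) with hw
    refine ⟨∑ i, len (P k2) i • w i, hSel (P k2) w (fun i => ?_), ?_⟩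
    · rw [hw]
      dsimp only
      by_cases h1 : dig j ((P k2).tag i) = 1
      · rw [if_pos h1]; exact heF _ _ h1
      · rw [if_neg h1]
        by_cases h2 : dig l ((P k2).tag i) = 1
        · rw [if_pos h2]; exact heF _ _ h2
        · rw [if_neg h2]; exact h0F _
    · have hval : ∀ i, φP (w i) = dig j ((P k2).tag i)
          + dig l ((P k2).tag i) - dig j ((P k2).tag i) * dig l ((P k2).tag i) := by
        intro i
        rw [hw]
        dsimp only
        by_cases h1 : dig j ((P k2).tag i) = 1
        · rw [if_pos h1, hφPe j, if_pos rfl, if_neg (by omega), h1]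
          ring
        · have h1' : dig j ((P k2).tag i) = 0 := by
            rcases dig_dichot j ((P k2).tag i) with h|h
            · exact h
            · exact absurd h h1
          rw [if_neg h1, h1']
          by_cases h2 : dig l ((P k2).tag i) = 1
          · rw [if_pos h2, hφPe l, if_neg (by omega), if_pos rfl, h2]
            ring
          · have h2' : dig l ((P k2).tag i) = 0 := by
              rcases dig_dichot l ((P k2).tag i) with h|h
              · exact h
              · exact absurd h h2
            rw [if_neg h2, h2', map_zero]
            ring
      have hsum : φP (∑ i, len (P k2) i • w i)
          = (∑ i, len (P k2) i * dig j ((P k2).tag i))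
            + (∑ i, len (P k2) i * dig l ((P k2).tag i))
            - (∑ i, len (P k2) i * (dig j ((P k2).tag i) * dig l ((P k2).tag i))) := by
        rw [map_sum]
        rw [← Finset.sum_add_distrib, ← Finset.sum_sub_distrib]
        refine Finset.sum_congr rfl (fun i _ => ?_)
        rw [map_smul, smul_eq_mul, hval i]
        ring
      rw [hsum]
      have e1 := abs_le.1 (rs_dig (P k2) (fun i => len_le_mesh (P k2) i) j)
      have e2 := abs_le.1 (rs_dig (P k2) (fun i => len_le_mesh (P k2) i) l)
      have e3 := abs_le.1 (rs_prod (P k2) (fun i => len_le_mesh (P k2) i) j s)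
      have b1 := hmesh2 (j+2) (by omega)
      have b2 : (2:ℝ)^(l+2) * (P k2).mesh ≤ ε := by
        have := hmesh2 (l+2) (by omega)
        exact this
      have b3 := hmesh2 (j+s+3) (by omega)
      linarith [e1.1, e2.1, e3.2]
  -- assemble the contradiction
  obtain ⟨z2, hz2S, hz2v⟩ := hx2
  obtain ⟨a2, ha2A, ha2v⟩ := trans1 (msum F (P k2)) hd2 z2 hz2S φP (2*C) hφPnorm
  obtain ⟨z0, hz0S, hz0v⟩ := trans2 (msum F (P k0)) hd0 a2 ha2A φP (2*C) hφPnorm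
  have hWlow : 3/4 - 3*ε - 4*C*ε ≤ W := by
    have := hU0 z0 hz0S
    linarith
  obtain ⟨x1, hx1S, hx1v⟩ := hx1
  obtain ⟨a1, ha1A, ha1v⟩ := trans1 (msum F (P k0)) hd0 x1 hx1S (g j) C (hgnorm j)
  obtain ⟨z1, hz1S, hz1v⟩ := trans2 (msum F (P k1)) hd1 a1 ha1A (g j) C (hgnorm j)
  have hWhigh : W ≤ 1/2 + ε + 2*C*ε := by
    have := hU1 z1 hz1S
    linarith
  -- numeric contradiction
  have : (1:ℝ)/4 ≤ 4*ε + 6*(C*ε) := by linarith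
  rw [hCε] at this
  linarith
end

section
/- Let X be an infinite-dimensional real Banach space. Then there exists a bounded multifunction F : [0,1] → 2^X \ {∅} such that I(F) = ∅. -/
open Pointwise Filter Metric Set

open scoped ENNReal


section BioScope
open Finset Metric

section Bio
variable {X : Type*} [NormedAddCommGroup X] [NormedSpace ℝ X]

/-- In an infinite-dimensional space, finitely many functionals have a common unit kernel vector. -/
lemma exists_unit_perp (hinf : ¬ FiniteDimensional ℝ X) {ι : Type*} [Fintype ι]
    (g : ι → X →L[ℝ] ℝ) : ∃ x : X, ‖x‖ = 1 ∧ ∀ i, g i x = 0 := by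
  classical
  set Φ : X →ₗ[ℝ] (ι → ℝ) := LinearMap.pi (fun i => (g i : X →ₗ[ℝ] ℝ)) with hΦ
  have hker : LinearMap.ker Φ ≠ ⊥ := by
    intro h
    exact hinf (FiniteDimensional.of_injective Φ (LinearMap.ker_eq_bot.mp h))
  obtain ⟨z, hz, hz0⟩ := Submodule.exists_mem_ne_zero_of_ne_bot hker
  refine ⟨‖z‖⁻¹ • z, ?_, ?_⟩
  · rw [norm_smul, norm_inv, norm_norm, inv_mul_cancel₀ (norm_ne_zero_iff.mpr hz0)]
  · intro i
    have : Φ z = 0 := hz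
    have hi : g i z = 0 := by
      have := congrFun this i
      simpa [hΦ] using this
    rw [map_smul, hi, smul_zero]

/-- Mazur's step: a unit vector almost orthogonal (in the basic-sequence sense)
to a given finite-dimensional subspace. -/
lemma mazur_step (hinf : ¬ FiniteDimensional ℝ X) (s : Set X) (hs : s.Finite)
    {ε : ℝ} (hε : 0 < ε) :
    ∃ x : X, ‖x‖ = 1 ∧ ∀ v ∈ Submodule.span ℝ s, ∀ t : ℝ,
      (1 - ε) * ‖v‖ ≤ ‖v + t • x‖ := by
  classical
  set V : Submodule ℝ X := Submodule.span ℝ s with hV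
  haveI : FiniteDimensional ℝ V := FiniteDimensional.span_of_finite ℝ hs
  -- compact unit sphere of V, viewed in X
  have hK : IsCompact (Subtype.val '' (sphere (0 : V) 1)) :=
    (isCompact_sphere (0:V) 1).image continuous_subtype_val
  obtain ⟨T, hTsub, hTfin, hTcov⟩ :=
    finite_approx_of_totallyBounded hK.totallyBounded ε hε
  haveI := hTfin.fintype
  -- dual functionals at net points
  have hgw : ∀ w : T, ∃ g : X →L[ℝ] ℝ, ‖g‖ = 1 ∧ g w = ‖(w:X)‖ := by
    intro w
    have hw1 : ‖(w:X)‖ = 1 := by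
      obtain ⟨v, hv, hvw⟩ := hTsub w.2
      have : ‖v‖ = 1 := by simpa [mem_sphere_iff_norm] using hv
      rw [← hvw]; simpa using this
    have : (w:X) ≠ 0 := by
      intro h; rw [h, norm_zero] at hw1; norm_num at hw1
    exact exists_dual_vector ℝ (w:X) (norm_ne_zero_iff.mpr this)
  choose g hg1 hgw' using hgw
  obtain ⟨x, hx1, hxperp⟩ := exists_unit_perp hinf g
  refine ⟨x, hx1, ?_⟩
  intro v hv t
  rcases eq_or_ne v 0 with rfl | hv0
  · simp
  -- normalize
  have hnv : 0 < ‖v‖ := norm_pos_iff.mpr hv0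
  set u : X := ‖v‖⁻¹ • v with hu
  have huV : u ∈ V := V.smul_mem _ hv
  have hunorm : ‖u‖ = 1 := by
    rw [hu, norm_smul, norm_inv, norm_norm, inv_mul_cancel₀ hnv.ne']
  have humem : u ∈ Subtype.val '' (sphere (0 : V) 1) := by
    exact ⟨⟨u, huV⟩, by simpa [mem_sphere_iff_norm] using hunorm, rfl⟩
  obtain ⟨w₀, hw₀⟩ := Set.mem_iUnion₂.mp (hTcov humem)
  obtain ⟨hw₀T, hw₀ball⟩ := hw₀
  set w : T := ⟨w₀, hw₀T⟩
  have hw1 : ‖(w:X)‖ = 1 := by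
    obtain ⟨vv, hvv, hvw⟩ := hTsub hw₀T
    have : ‖vv‖ = 1 := by simpa [mem_sphere_iff_norm] using hvv
    rw [show (w:X) = w₀ from rfl, ← hvw]; simpa using this
  have hdist : ‖u - w₀‖ < ε := by
    have := mem_ball.mp hw₀ball
    rwa [dist_eq_norm] at this
  -- lower bound via the functional
  have key : (1 - ε) ≤ ‖u + (‖v‖⁻¹ * t) • x‖ := by
    have h1 : g w (u + (‖v‖⁻¹ * t) • x) = g w w₀ + g w (u - w₀) := by
      have huw : u + (‖v‖⁻¹ * t) • x = w₀ + (u - w₀) + (‖v‖⁻¹ * t) • x := by abel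
      rw [huw, map_add, map_add, map_smul, hxperp w, smul_zero, add_zero]
    have h2 : g w w₀ = 1 := by
      have := hgw' w
      rw [show ((w:X)) = w₀ from rfl] at this
      rw [this]; rw [show ((w:X)) = w₀ from rfl] at hw1; exact hw1
    have h3 : |g w (u - w₀)| ≤ ‖u - w₀‖ := by
      calc |g w (u - w₀)| = ‖g w (u - w₀)‖ := rfl
        _ ≤ ‖g w‖ * ‖u - w₀‖ := (g w).le_opNorm _
        _ = ‖u - w₀‖ := by rw [hg1 w, one_mul]
    have h4 : g w (u + (‖v‖⁻¹ * t) • x) ≥ 1 - ε := by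
      rw [h1, h2]
      have : g w (u - w₀) ≥ -ε := by
        have := (abs_le.mp h3).1
        linarith [hdist]
      linarith
    calc (1 - ε) ≤ g w (u + (‖v‖⁻¹ * t) • x) := h4
      _ ≤ |g w (u + (‖v‖⁻¹ * t) • x)| := le_abs_self _
      _ ≤ ‖g w‖ * ‖u + (‖v‖⁻¹ * t) • x‖ := (g w).le_opNorm _
      _ = ‖u + (‖v‖⁻¹ * t) • x‖ := by rw [hg1 w, one_mul]
  -- scale back
  have hscale : v + t • x = ‖v‖ • (u + (‖v‖⁻¹ * t) • x) := by
    rw [smul_add, hu, smul_smul, smul_smul, mul_inv_cancel₀ hnv.ne', one_smul]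
    congr 2
    field_simp
  calc (1 - ε) * ‖v‖ = ‖v‖ * (1 - ε) := by ring
    _ ≤ ‖v‖ * ‖u + (‖v‖⁻¹ * t) • x‖ := by
        apply mul_le_mul_of_nonneg_left key hnv.le
    _ = ‖‖v‖ • (u + (‖v‖⁻¹ * t) • x)‖ := by rw [norm_smul, norm_norm]
    _ = ‖v + t • x‖ := by rw [← hscale]

end Bio

section BioSeq
variable {X : Type*} [NormedAddCommGroup X] [NormedSpace ℝ X]
variable (hinf : ¬ FiniteDimensional ℝ X)

private noncomputable def pickB (L : List X) : X :=
  (mazur_step hinf {y | y ∈ L} L.finite_toSet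
    (ε := (1/2)^(L.length+2)) (by positivity)).choose

private lemma pickB_spec (L : List X) :
    ‖pickB hinf L‖ = 1 ∧ ∀ v ∈ Submodule.span ℝ {y | y ∈ L}, ∀ t : ℝ,
      (1 - (1/2)^(L.length+2)) * ‖v‖ ≤ ‖v + t • pickB hinf L‖ :=
  (mazur_step hinf {y | y ∈ L} L.finite_toSet
    (ε := (1/2)^(L.length+2)) (by positivity)).choose_spec

private noncomputable def chainB : ℕ → List X
  | 0 => []
  | n+1 => chainB n ++ [pickB hinf (chainB n)]

private noncomputable def xseq (n : ℕ) : X := pickB hinf (chainB hinf n)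

private lemma chainB_length (n : ℕ) : (chainB hinf n).length = n := by
  induction n with
  | zero => rfl
  | succ n ih => simp [chainB, ih]

private lemma mem_chainB (n : ℕ) (y : X) :
    y ∈ chainB hinf n ↔ ∃ i : ℕ, i < n ∧ y = xseq hinf i := by
  induction n with
  | zero => simp [chainB]
  | succ n ih =>
    simp only [chainB, List.mem_append, List.mem_singleton, ih]
    constructor
    · rintro (⟨i, hi, rfl⟩ | rfl)
      · exact ⟨i, Nat.lt_succ_of_lt hi, rfl⟩
      · exact ⟨n, Nat.lt_succ_self n, rfl⟩
    · rintro ⟨i, hi, rfl⟩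
      rcases Nat.lt_succ_iff_lt_or_eq.mp hi with h | rfl
      · exact Or.inl ⟨i, h, rfl⟩
      · exact Or.inr rfl

private lemma xseq_norm (n : ℕ) : ‖xseq hinf n‖ = 1 := (pickB_spec hinf _).1

private lemma xseq_step (n : ℕ) (v : X)
    (hv : v ∈ Submodule.span ℝ {y | y ∈ chainB hinf n}) (t : ℝ) :
    (1 - (1/2)^(n+2)) * ‖v‖ ≤ ‖v + t • xseq hinf n‖ := by
  have := (pickB_spec hinf (chainB hinf n)).2 v hv t
  rwa [chainB_length] at this

end BioSeq

section BioSums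
variable {X : Type*} [NormedAddCommGroup X] [NormedSpace ℝ X]
variable (hinf : ¬ FiniteDimensional ℝ X)

private lemma prod_one_sub_ge (F : Finset ℕ) :
    (1/2 : ℝ) ≤ ∏ k ∈ F, (1 - (1/2:ℝ)^(k+2)) := by
  classical
  have hfac : ∀ k : ℕ, (0:ℝ) ≤ 1 - (1/2:ℝ)^(k+2) := by
    intro k
    have : (1/2:ℝ)^(k+2) ≤ 1 := pow_le_one₀ (by norm_num) (by norm_num)
    linarith
  have h1 : 1 - (∑ k ∈ F, (1/2:ℝ)^(k+2)) ≤ ∏ k ∈ F, (1 - (1/2:ℝ)^(k+2)) := by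
    induction F using Finset.cons_induction with
    | empty => simp
    | cons a s ha ih =>
      rw [Finset.prod_cons, Finset.sum_cons]
      have hprod0 : (0:ℝ) ≤ ∏ k ∈ s, (1 - (1/2:ℝ)^(k+2)) :=
        Finset.prod_nonneg (fun k _ => hfac k)
      have hak : (0:ℝ) ≤ (1/2:ℝ)^(a+2) := by positivity
      nlinarith [ih, hfac a, Finset.sum_nonneg (fun k (_ : k ∈ s) => (by positivity : (0:ℝ) ≤ (1/2:ℝ)^(k+2)))]
  have h2 : (∑ k ∈ F, (1/2:ℝ)^(k+2)) ≤ 1/2 := by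
    obtain ⟨N, hN⟩ : ∃ N, ∀ k ∈ F, k < N := ⟨(F.sup id) + 1, fun k hk => Nat.lt_succ_of_le (Finset.le_sup (f := id) hk)⟩
    calc (∑ k ∈ F, (1/2:ℝ)^(k+2)) ≤ ∑ k ∈ range N, (1/2:ℝ)^(k+2) := by
          apply Finset.sum_le_sum_of_subset_of_nonneg
          · intro k hk; exact Finset.mem_range.mpr (hN k hk)
          · intro k _ _; positivity
      _ = (1/4) * ∑ k ∈ range N, (1/2:ℝ)^k := by
          rw [Finset.mul_sum]; apply Finset.sum_congr rfl; intro k _; ring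
      _ ≤ (1/4) * 2 := by
          have := sum_geometric_two_le N
          nlinarith
      _ = 1/2 := by norm_num
  linarith

private lemma Ssum_mem_span (a : ℕ → ℝ) (n : ℕ) :
    (∑ i ∈ range n, a i • xseq hinf i) ∈ Submodule.span ℝ {y | y ∈ chainB hinf n} := by
  apply Submodule.sum_mem
  intro i hi
  apply Submodule.smul_mem
  apply Submodule.subset_span
  exact (mem_chainB hinf n _).mpr ⟨i, Finset.mem_range.mp hi, rfl⟩

private lemma Ssum_le (a : ℕ → ℝ) {n m : ℕ} (hnm : n ≤ m) :
    ‖∑ i ∈ range n, a i • xseq hinf i‖ ≤ 2 * ‖∑ i ∈ range m, a i • xseq hinf i‖ := by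
  set S : ℕ → ℝ := fun j => ‖∑ i ∈ range j, a i • xseq hinf i‖ with hS
  have key : ∀ m', n ≤ m' → S n * (∏ k ∈ Finset.Ico n m', (1 - (1/2:ℝ)^(k+2))) ≤ S m' := by
    intro m'
    induction m' with
    | zero => intro h; interval_cases n; simp [S]
    | succ m' ih =>
      intro h
      rcases eq_or_lt_of_le h with rfl | h'
      · simp
      have hn : n ≤ m' := Nat.lt_succ_iff.mp h'
      · rw [Finset.prod_Ico_succ_top hn]
        have step := xseq_step hinf m' _ (Ssum_mem_span hinf a m') (a m')
        have hSm : (1 - (1/2:ℝ)^(m'+2)) * S m' ≤ S (m'+1) := by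
          have : (∑ i ∈ range m', a i • xseq hinf i) + a m' • xseq hinf m'
              = ∑ i ∈ range (m'+1), a i • xseq hinf i := (Finset.sum_range_succ _ m').symm
          rw [hS]; dsimp only; rw [← this]; exact step
        have hprod0 : (0:ℝ) ≤ ∏ k ∈ Finset.Ico n m', (1 - (1/2:ℝ)^(k+2)) := by
          apply Finset.prod_nonneg; intro k _
          have : (1/2:ℝ)^(k+2) ≤ 1 := by
            apply pow_le_one₀ (by norm_num) (by norm_num)
          linarith
        have hSn0 : (0:ℝ) ≤ S n := norm_nonneg _
        calc S n * ((∏ k ∈ Finset.Ico n m', (1 - (1/2:ℝ)^(k+2))) * (1 - (1/2:ℝ)^(m'+2)))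
            = (1 - (1/2:ℝ)^(m'+2)) * (S n * ∏ k ∈ Finset.Ico n m', (1 - (1/2:ℝ)^(k+2))) := by ring
          _ ≤ (1 - (1/2:ℝ)^(m'+2)) * S m' := by
              apply mul_le_mul_of_nonneg_left (ih hn)
              have : (1/2:ℝ)^(m'+2) ≤ 1 := pow_le_one₀ (by norm_num) (by norm_num)
              linarith
          _ ≤ S (m'+1) := hSm
  have h2 := key m hnm
  have hhalf := prod_one_sub_ge (Finset.Ico n m)
  have hSn0 : (0:ℝ) ≤ S n := norm_nonneg _
  nlinarith

private lemma coord_bound (a : ℕ → ℝ) {j m : ℕ} (hjm : j < m) :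
    |a j| ≤ 4 * ‖∑ i ∈ range m, a i • xseq hinf i‖ := by
  have h1 : ‖∑ i ∈ range (j+1), a i • xseq hinf i‖ ≤ 2 * ‖∑ i ∈ range m, a i • xseq hinf i‖ :=
    Ssum_le hinf a hjm
  have h2 : ‖∑ i ∈ range j, a i • xseq hinf i‖ ≤ 2 * ‖∑ i ∈ range m, a i • xseq hinf i‖ :=
    Ssum_le hinf a (Nat.le_of_lt hjm)
  have h3 : a j • xseq hinf j
      = (∑ i ∈ range (j+1), a i • xseq hinf i) - ∑ i ∈ range j, a i • xseq hinf i := by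
    rw [Finset.sum_range_succ]; abel
  have h4 : |a j| = ‖a j • xseq hinf j‖ := by
    rw [norm_smul, xseq_norm hinf, mul_one, Real.norm_eq_abs]
  rw [h4, h3]
  calc ‖(∑ i ∈ range (j+1), a i • xseq hinf i) - ∑ i ∈ range j, a i • xseq hinf i‖
      ≤ ‖∑ i ∈ range (j+1), a i • xseq hinf i‖ + ‖∑ i ∈ range j, a i • xseq hinf i‖ :=
        norm_sub_le _ _
    _ ≤ 4 * ‖∑ i ∈ range m, a i • xseq hinf i‖ := by linarith

end BioSums

section BioFinal
variable {X : Type*} [NormedAddCommGroup X] [NormedSpace ℝ X]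
variable (hinf : ¬ FiniteDimensional ℝ X)

private lemma xseq_li : LinearIndependent ℝ (xseq hinf) := by
  classical
  rw [linearIndependent_iff']
  intro s g hsum i his
  obtain ⟨N, hN⟩ : ∃ N, ∀ k ∈ s, k < N :=
    ⟨(s.sup id) + 1, fun k hk => Nat.lt_succ_of_le (Finset.le_sup (f := id) hk)⟩
  set g' : ℕ → ℝ := fun k => if k ∈ s then g k else 0 with hg'
  have hsum' : ∑ k ∈ range N, g' k • xseq hinf k = 0 := by
    have h1 : ∑ k ∈ s, g' k • xseq hinf k = ∑ k ∈ range N, g' k • xseq hinf k := by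
      apply Finset.sum_subset (fun k hk => Finset.mem_range.mpr (hN k hk))
      intro k _ hk
      simp [hg', hk]
    have h2 : ∑ k ∈ s, g' k • xseq hinf k = ∑ k ∈ s, g k • xseq hinf k := by
      apply Finset.sum_congr rfl
      intro k hk
      simp [hg', hk]
    rw [← h1, h2, hsum]
  have := coord_bound hinf g' (hjm := hN i his)
  rw [hsum'] at this
  simp only [norm_zero, mul_zero] at this
  have : |g' i| = 0 := le_antisymm this (abs_nonneg _)
  have hgi : g' i = 0 := abs_eq_zero.mp this
  simpa [hg', his] using hgi

private noncomputable def Vspan : Submodule ℝ X := Submodule.span ℝ (Set.range (xseq hinf))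

private lemma coord_bound_finsupp (c : ℕ →₀ ℝ) (j : ℕ) :
    |c j| ≤ 4 * ‖Finsupp.linearCombination ℝ (xseq hinf) c‖ := by
  classical
  obtain ⟨N, hN⟩ : ∃ N, (∀ k ∈ c.support, k < N) ∧ j < N :=
    ⟨(c.support.sup id) + j + 1,
     ⟨fun k hk => by
        have h := Finset.le_sup (f := id) hk
        simp only [id] at h
        omega,
      by omega⟩⟩
  have hrepr : Finsupp.linearCombination ℝ (xseq hinf) c
      = ∑ k ∈ range N, c k • xseq hinf k := by
    rw [Finsupp.linearCombination_apply, Finsupp.sum]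
    apply Finset.sum_subset
    · intro k hk; exact Finset.mem_range.mpr (hN.1 k hk)
    · intro k _ hk
      rw [Finsupp.notMem_support_iff.mp hk, zero_smul]
  rw [hrepr]
  exact coord_bound hinf c hN.2

/-- Bounded biorthogonal system in any infinite-dimensional real normed space. -/
theorem exists_biorthogonal (hinf : ¬ FiniteDimensional ℝ X) :
    ∃ (u : ℕ → X) (f : ℕ → X →L[ℝ] ℝ),
      (∀ j, ‖u j‖ = 1) ∧ (∀ j i, f j (u i) = if i = j then 1 else 0) ∧ (∀ j, ‖f j‖ ≤ 4) := by
  classical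
  have li := xseq_li hinf
  have hf : ∀ j : ℕ, ∃ f : X →L[ℝ] ℝ, (∀ i, f (xseq hinf i) = if i = j then 1 else 0) ∧ ‖f‖ ≤ 4 := by
    intro j
    set V : Submodule ℝ X := Submodule.span ℝ (Set.range (xseq hinf)) with hV
    set φ : V →ₗ[ℝ] ℝ := (Finsupp.lapply j).comp li.repr with hφ
    have hbound : ∀ y : V, ‖φ y‖ ≤ 4 * ‖y‖ := by
      intro y
      have h1 : Finsupp.linearCombination ℝ (xseq hinf) (li.repr y) = (y : X) :=
        li.linearCombination_repr y
      have h2 : |(li.repr y) j| ≤ 4 * ‖Finsupp.linearCombination ℝ (xseq hinf) (li.repr y)‖ :=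
        coord_bound_finsupp hinf (li.repr y) j
      rw [h1] at h2
      have h3 : ‖(y : X)‖ = ‖y‖ := rfl
      rw [h3] at h2
      simpa [hφ, Real.norm_eq_abs] using h2
    set ψ : V →L[ℝ] ℝ := LinearMap.mkContinuous φ 4 hbound with hψ
    obtain ⟨f, hfext, hfnorm⟩ := exists_extension_norm_eq V ψ
    refine ⟨f, ?_, ?_⟩
    · intro i
      have hmem : xseq hinf i ∈ V := Submodule.subset_span (Set.mem_range_self i)
      have he : f (xseq hinf i) = ψ (⟨xseq hinf i, hmem⟩ : V) := hfext ⟨xseq hinf i, hmem⟩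
      rw [he]
      have h5 : ψ (⟨xseq hinf i, hmem⟩ : V) = (li.repr ⟨xseq hinf i, hmem⟩) j := by
        simp [hψ, hφ, LinearMap.mkContinuous_apply]
      rw [h5, li.repr_eq_single i ⟨xseq hinf i, hmem⟩ rfl]
      exact Finsupp.single_apply
    · rw [hfnorm]
      exact LinearMap.mkContinuous_norm_le φ (by norm_num) hbound
  choose f hf1 hf2 using hf
  exact ⟨xseq hinf, f, fun j => xseq_norm hinf j, fun j i => hf1 j i, hf2⟩

end BioFinal

end BioScope

namespace TaggedPartition

variable (P : TaggedPartition)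

lemma n_pos : 0 < P.n := by
  rcases Nat.eq_zero_or_pos P.n with h | h
  · exfalso
    have h1 := P.pt_last
    have h0 := P.pt_zero
    have he : Fin.last P.n = (0 : Fin (P.n+1)) := by
      apply Fin.ext; simp [h]
    rw [he, h0] at h1; norm_num at h1
  · exact h

/-- The partition points, as a function on `ℕ` (constant above `n`). -/
noncomputable def ptN (k : ℕ) : ℝ := P.pt ⟨min k P.n, Nat.lt_succ_of_le (min_le_right _ _)⟩

/-- The tags, as a function on `ℕ` (junk above `n`). -/
noncomputable def tagN (k : ℕ) : ℝ := if h : k < P.n then P.tag ⟨k, h⟩ else 0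

/-- Lengths of the subintervals. -/
noncomputable def dN (k : ℕ) : ℝ := P.ptN (k+1) - P.ptN k

lemma ptN_zero : P.ptN 0 = 0 := by
  have h : (⟨min 0 P.n, Nat.lt_succ_of_le (min_le_right _ _)⟩ : Fin (P.n+1)) = 0 := by
    apply Fin.ext; simp
  rw [ptN, h, P.pt_zero]

lemma ptN_top : P.ptN P.n = 1 := by
  have h : (⟨min P.n P.n, Nat.lt_succ_of_le (min_le_right _ _)⟩ : Fin (P.n+1)) = Fin.last P.n := by
    apply Fin.ext; simp [Fin.last]
  rw [ptN, h, P.pt_last]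

lemma ptN_mono : Monotone P.ptN := by
  intro k l hkl
  apply P.pt_mono
  simp only [Fin.mk_le_mk]
  exact min_le_min hkl le_rfl

lemma ptN_val_castSucc (i : Fin P.n) : P.ptN i.val = P.pt i.castSucc := by
  have h : (⟨min i.val P.n, Nat.lt_succ_of_le (min_le_right _ _)⟩ : Fin (P.n+1)) = i.castSucc := by
    apply Fin.ext
    simp [Nat.min_eq_left (le_of_lt i.isLt)]
  rw [ptN, h]

lemma ptN_val_succ (i : Fin P.n) : P.ptN (i.val + 1) = P.pt i.succ := by
  have h : (⟨min (i.val+1) P.n, Nat.lt_succ_of_le (min_le_right _ _)⟩ : Fin (P.n+1)) = i.succ := by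
    apply Fin.ext
    simp [Nat.min_eq_left (Nat.succ_le_of_lt i.isLt)]
  rw [ptN, h]

lemma tagN_val (i : Fin P.n) : P.tagN i.val = P.tag i := by
  rw [tagN, dif_pos i.isLt]

lemma dN_nonneg (k : ℕ) : 0 ≤ P.dN k := by
  rw [dN]
  have := P.ptN_mono (Nat.le_succ k)
  linarith

lemma tagN_between {k : ℕ} (hk : k < P.n) : P.ptN k ≤ P.tagN k ∧ P.tagN k ≤ P.ptN (k+1) := by
  have h := P.tag_mem ⟨k, hk⟩
  rw [Set.mem_Icc] at h
  have h1 := P.ptN_val_castSucc ⟨k, hk⟩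
  have h2 := P.ptN_val_succ ⟨k, hk⟩
  have h3 := P.tagN_val ⟨k, hk⟩
  simp only at h1 h2 h3
  rw [h1, h2, h3]
  exact h

lemma dN_le_mesh {k : ℕ} (hk : k < P.n) : P.dN k ≤ P.mesh := by
  have hb : BddAbove (Set.range (fun i : Fin P.n => P.pt i.succ - P.pt i.castSucc)) :=
    (Set.finite_range _).bddAbove
  have hle := le_ciSup hb (⟨k, hk⟩ : Fin P.n)
  rw [dN]
  have h1 := P.ptN_val_castSucc ⟨k, hk⟩
  have h2 := P.ptN_val_succ ⟨k, hk⟩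
  simp only at h1 h2
  rw [h1, h2]
  exact hle

lemma mesh_nonneg : 0 ≤ P.mesh :=
  le_trans (P.dN_nonneg 0) (P.dN_le_mesh P.n_pos)

lemma sum_dN : ∑ k ∈ Finset.range P.n, P.dN k = 1 := by
  rw [show (∑ k ∈ Finset.range P.n, P.dN k)
      = ∑ k ∈ Finset.range P.n, (P.ptN (k+1) - P.ptN k) from rfl,
    Finset.sum_range_sub, P.ptN_top, P.ptN_zero, sub_zero]

lemma sum_fin_lengths : ∑ i : Fin P.n, (P.pt i.succ - P.pt i.castSucc) = 1 := by
  have h : ∀ i : Fin P.n, P.pt i.succ - P.pt i.castSucc = P.dN i.val := by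
    intro i
    rw [dN, P.ptN_val_castSucc i, P.ptN_val_succ i]
  calc ∑ i : Fin P.n, (P.pt i.succ - P.pt i.castSucc) = ∑ i : Fin P.n, P.dN i.val :=
        Finset.sum_congr rfl (fun i _ => h i)
    _ = ∑ k ∈ Finset.range P.n, P.dN k := Fin.sum_univ_eq_sum_range _ _
    _ = 1 := P.sum_dN

/-- Weight of subintervals whose tag lies in `[a, b]` is at most `b - a + 2 mesh`. -/
lemma weight_Icc (a b : ℝ) (hab : a ≤ b) :
    ∑ k ∈ (Finset.range P.n).filter (fun k => a ≤ P.tagN k ∧ P.tagN k ≤ b), P.dN k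
      ≤ (b - a) + 2 * P.mesh := by
  classical
  set s := (Finset.range P.n).filter (fun k => a ≤ P.tagN k ∧ P.tagN k ≤ b) with hs
  rcases Finset.eq_empty_or_nonempty s with h | h
  · rw [h, Finset.sum_empty]
    have := P.mesh_nonneg
    linarith
  · set i1 := s.min' h with hi1
    set i2 := s.max' h with hi2
    have hi1s : i1 ∈ s := s.min'_mem h
    have hi2s : i2 ∈ s := s.max'_mem h
    have hi1n : i1 < P.n := Finset.mem_range.mp (Finset.mem_filter.mp hi1s).1
    have hi2n : i2 < P.n := Finset.mem_range.mp (Finset.mem_filter.mp hi2s).1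
    have hi1t := (Finset.mem_filter.mp hi1s).2
    have hi2t := (Finset.mem_filter.mp hi2s).2
    have hsub : s ⊆ Finset.Ico i1 (i2+1) := by
      intro k hk
      exact Finset.mem_Ico.mpr ⟨s.min'_le k hk, Nat.lt_succ_of_le (s.le_max' k hk)⟩
    have h12 : i1 ≤ i2 + 1 := Nat.le_succ_of_le (s.min'_le i2 hi2s)
    calc ∑ k ∈ s, P.dN k ≤ ∑ k ∈ Finset.Ico i1 (i2+1), P.dN k := by
          apply Finset.sum_le_sum_of_subset_of_nonneg hsub
          intro k _ _; exact P.dN_nonneg k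
      _ = P.ptN (i2+1) - P.ptN i1 := by
          rw [Finset.sum_Ico_eq_sub _ h12]
          simp only [dN]
          rw [Finset.sum_range_sub, Finset.sum_range_sub]
          ring
      _ ≤ (P.tagN i2 + P.mesh) - (P.tagN i1 - P.mesh) := by
          have hA : P.ptN (i2+1) ≤ P.tagN i2 + P.mesh := by
            have hx : P.ptN (i2+1) - P.ptN i2 ≤ P.mesh := P.dN_le_mesh hi2n
            have hy := (P.tagN_between hi2n).1
            linarith
          have hB : P.tagN i1 - P.mesh ≤ P.ptN i1 := by
            have hx : P.ptN (i1+1) - P.ptN i1 ≤ P.mesh := P.dN_le_mesh hi1n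
            have hy := (P.tagN_between hi1n).2
            linarith
          linarith
      _ ≤ (b - a) + 2 * P.mesh := by
          have h1 := hi1t.1
          have h2 := hi2t.2
          linarith

end TaggedPartition


/-! ### Finite unions of rational intervals -/

/-- Membership in the union of the closed intervals listed in `σ`. -/
def memE (σ : List (ℚ × ℚ)) (t : ℝ) : Prop :=
  ∃ c ∈ σ, ((c.1 : ℝ) ≤ t ∧ t ≤ (c.2 : ℝ))

/-- Total length of the (rational) intervals in `σ`. -/
def lenE (σ : List (ℚ × ℚ)) : ℝ := (σ.map (fun c => ((c.2 : ℝ) - (c.1 : ℝ)))).sum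

/-- A list of rational intervals is good if all are genuine intervals and the
total length is at most `1/4`. -/
def goodE (σ : List (ℚ × ℚ)) : Prop :=
  (∀ c ∈ σ, ((c.1 : ℝ) ≤ (c.2 : ℝ))) ∧ lenE σ ≤ 1/4

open scoped Classical

namespace TaggedPartition

variable (P : TaggedPartition)

lemma weight_E (σ : List (ℚ × ℚ)) (hσ : ∀ c ∈ σ, ((c.1 : ℝ) ≤ (c.2 : ℝ))) :
    ∑ k ∈ (Finset.range P.n).filter (fun k => memE σ (P.tagN k)), P.dN k
      ≤ lenE σ + 2 * σ.length * P.mesh := by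
  classical
  induction σ with
  | nil =>
    simp [memE, lenE]
  | cons c σ' ih =>
    have hc : ((c.1 : ℝ) ≤ (c.2 : ℝ)) := hσ c (List.mem_cons_self)
    have hσ' : ∀ c' ∈ σ', ((c'.1 : ℝ) ≤ (c'.2 : ℝ)) := fun c' hc' => hσ c' (List.mem_cons_of_mem c hc')
    set s1 := (Finset.range P.n).filter (fun k => (c.1 : ℝ) ≤ P.tagN k ∧ P.tagN k ≤ (c.2 : ℝ)) with hs1
    set s2 := (Finset.range P.n).filter (fun k => memE σ' (P.tagN k)) with hs2
    have hsubset : (Finset.range P.n).filter (fun k => memE (c :: σ') (P.tagN k)) ⊆ s1 ∪ s2 := by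
      intro k hk
      obtain ⟨hk1, hk2⟩ := Finset.mem_filter.mp hk
      obtain ⟨c', hc', hcc⟩ := hk2
      rcases List.mem_cons.mp hc' with rfl | hmem
      · exact Finset.mem_union_left _ (Finset.mem_filter.mpr ⟨hk1, hcc⟩)
      · exact Finset.mem_union_right _ (Finset.mem_filter.mpr ⟨hk1, ⟨c', hmem, hcc⟩⟩)
    have hstep : ∑ k ∈ (Finset.range P.n).filter (fun k => memE (c :: σ') (P.tagN k)), P.dN k
        ≤ (∑ k ∈ s1, P.dN k) + ∑ k ∈ s2, P.dN k := by
      calc ∑ k ∈ (Finset.range P.n).filter (fun k => memE (c :: σ') (P.tagN k)), P.dN k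
          ≤ ∑ k ∈ s1 ∪ s2, P.dN k := by
            apply Finset.sum_le_sum_of_subset_of_nonneg hsubset
            intro k _ _; exact P.dN_nonneg k
        _ ≤ (∑ k ∈ s1, P.dN k) + ∑ k ∈ s2, P.dN k := by
            have := Finset.sum_union_inter (s₁ := s1) (s₂ := s2) (f := P.dN)
            have hinter : (0:ℝ) ≤ ∑ k ∈ s1 ∩ s2, P.dN k :=
              Finset.sum_nonneg (fun k _ => P.dN_nonneg k)
            linarith
    have h1 : ∑ k ∈ s1, P.dN k ≤ ((c.2 : ℝ) - (c.1 : ℝ)) + 2 * P.mesh := P.weight_Icc _ _ hc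
    have h2 : ∑ k ∈ s2, P.dN k ≤ lenE σ' + 2 * σ'.length * P.mesh := ih hσ'
    have hlen : lenE (c :: σ') = ((c.2 : ℝ) - (c.1 : ℝ)) + lenE σ' := by
      simp [lenE]
    have hlength : ((c :: σ').length : ℝ) = (σ'.length : ℝ) + 1 := by
      simp
    rw [hlen, hlength]
    have hmesh := P.mesh_nonneg
    calc ∑ k ∈ (Finset.range P.n).filter (fun k => memE (c :: σ') (P.tagN k)), P.dN k
        ≤ (∑ k ∈ s1, P.dN k) + ∑ k ∈ s2, P.dN k := hstep
      _ ≤ (((c.2 : ℝ) - (c.1 : ℝ)) + 2 * P.mesh) + (lenE σ' + 2 * σ'.length * P.mesh) := by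
          linarith
      _ = ((c.2 : ℝ) - (c.1 : ℝ)) + lenE σ' + 2 * ((σ'.length : ℝ) + 1) * P.mesh := by ring

end TaggedPartition


/-! ### Membership in Minkowski sums of finitely many sets -/

section SetSums
variable {Y : Type*} [AddCommMonoid Y]

lemma mem_sum_sets {ι : Type*} (s : Finset ι) (A : ι → Set Y) (y : ι → Y)
    (hy : ∀ i ∈ s, y i ∈ A i) : (∑ i ∈ s, y i) ∈ ∑ i ∈ s, A i := by
  classical
  induction s using Finset.cons_induction with
  | empty => simp
  | cons a t ha ih =>
    rw [Finset.sum_cons, Finset.sum_cons]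
    exact Set.add_mem_add (hy a (Finset.mem_cons_self a t))
      (ih (fun i hi => hy i (Finset.mem_cons_of_mem hi)))

lemma exists_rep_of_mem_sum_sets {ι : Type*} (s : Finset ι) (A : ι → Set Y) :
    ∀ w : Y, w ∈ (∑ i ∈ s, A i) → ∃ y : ι → Y, (∀ i ∈ s, y i ∈ A i) ∧ w = ∑ i ∈ s, y i := by
  classical
  induction s using Finset.cons_induction with
  | empty =>
    intro w hw
    rw [Finset.sum_empty] at hw
    refine ⟨fun _ => 0, by simp, ?_⟩
    rw [Finset.sum_empty]
    simpa using hw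
  | cons a t ha ih =>
    intro w hw
    rw [Finset.sum_cons] at hw
    obtain ⟨x, hx, z, hz, hxz⟩ := Set.mem_add.mp hw
    obtain ⟨y', hy', rfl⟩ := ih z hz
    refine ⟨Function.update y' a x, ?_, ?_⟩
    · intro i hi
      rcases Finset.mem_cons.mp hi with rfl | hit
      · rwa [Function.update_self]
      · rw [Function.update_of_ne (fun h : i = a => ha (h ▸ hit))]
        exact hy' i hit
    · rw [Finset.sum_cons, Function.update_self]
      have hsum : ∑ i ∈ t, Function.update y' a x i = ∑ i ∈ t, y' i := by
        apply Finset.sum_congr rfl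
        intro i hi
        rw [Function.update_of_ne (fun h : i = a => ha (h ▸ hi))]
      rw [hsum, ← hxz]

end SetSums

/-! ### Capturing finitely many points in a good list of intervals -/

lemma exists_good_capture (n : ℕ) (τ : ℕ → ℝ) :
    ∃ σ : List (ℚ × ℚ), goodE σ ∧ σ.length = n ∧ ∀ k, k < n → memE σ (τ k) := by
  have hex : ∀ i : Fin n, ∃ pq : ℚ × ℚ, ((pq.1 : ℝ) ≤ τ i.val) ∧ (τ i.val ≤ (pq.2 : ℝ))
      ∧ ((pq.2 : ℝ) - (pq.1 : ℝ) ≤ 1/(4*((n:ℝ)+1))) := by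
    intro i
    have hd0 : (0:ℝ) < 1/(8*((n:ℝ)+1)) := by positivity
    obtain ⟨p, hp1, hp2⟩ := exists_rat_btwn (show τ i.val - 1/(8*((n:ℝ)+1)) < τ i.val by linarith)
    obtain ⟨q, hq1, hq2⟩ := exists_rat_btwn (show τ i.val < τ i.val + 1/(8*((n:ℝ)+1)) by linarith)
    refine ⟨(p, q), le_of_lt hp2, le_of_lt hq1, ?_⟩
    have h2d : 2 * (1/(8*((n:ℝ)+1))) = 1/(4*((n:ℝ)+1)) := by
      have hne : ((n:ℝ)+1) ≠ 0 := by positivity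
      field_simp
      ring
    simp only
    linarith
  choose pq hpq using hex
  refine ⟨List.ofFn pq, ⟨?_, ?_⟩, by simp, ?_⟩
  · intro c hc
    obtain ⟨i, hi⟩ := (List.mem_ofFn).mp hc
    rw [← hi]
    exact le_trans (hpq i).1 (hpq i).2.1
  · have hmap : lenE (List.ofFn pq) = ∑ i : Fin n, ((pq i).2 - (pq i).1 : ℝ) := by
      rw [lenE, List.map_ofFn, List.sum_ofFn]
      rfl
    rw [hmap]
    calc ∑ i : Fin n, ((pq i).2 - (pq i).1 : ℝ) ≤ ∑ _i : Fin n, 1/(4*((n:ℝ)+1)) :=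
          Finset.sum_le_sum (fun i _ => (hpq i).2.2)
      _ = n * (1/(4*((n:ℝ)+1))) := by
          rw [Finset.sum_const, Finset.card_univ, Fintype.card_fin, nsmul_eq_mul]
      _ ≤ 1/4 := by
          have h1 : (0:ℝ) < 4*((n:ℝ)+1) := by positivity
          rw [mul_one_div, div_le_div_iff₀ h1 (by norm_num : (0:ℝ) < 4)]
          have hn0 : (0:ℝ) ≤ (n:ℝ) := Nat.cast_nonneg n
          nlinarith
  · intro k hk
    exact ⟨pq ⟨k, hk⟩, (List.mem_ofFn).mpr ⟨⟨k, hk⟩, rfl⟩, (hpq ⟨k, hk⟩).1, (hpq ⟨k, hk⟩).2.1⟩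


/-! ### The main theorem -/

theorem exists_boundedMultifunction_limitSets_empty_of_infiniteDimensional'
    {X : Type*} [NormedAddCommGroup X] [NormedSpace ℝ X] [CompleteSpace X]
    (hinf : ¬ FiniteDimensional ℝ X) :
    ∃ F : ℝ → Set X,
      (∀ t ∈ Set.Icc (0 : ℝ) 1, (F t).Nonempty) ∧
      (∃ M : ℝ, ∀ t ∈ Set.Icc (0 : ℝ) 1, ∀ a ∈ F t, ‖a‖ ≤ M) ∧
      limitSets F = ∅ := by
  classical
  obtain ⟨u, f, hu, hbio, hfnorm⟩ := exists_biorthogonal (X := X) hinf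
  set enc : List (ℚ × ℚ) ≃ ℕ := Denumerable.eqv (List (ℚ × ℚ)) with henc
  set F : ℝ → Set X := fun t => {y | ∃ σ : List (ℚ × ℚ), goodE σ ∧ memE σ t ∧ y = u (enc σ)}
    with hF
  have hFval : ∀ t y, y ∈ F t ↔ ∃ σ : List (ℚ × ℚ), goodE σ ∧ memE σ t ∧ y = u (enc σ) := by
    intro t y; rw [hF]; rfl
  have hFne : ∀ t ∈ Set.Icc (0:ℝ) 1, (F t).Nonempty := by
    intro t _
    obtain ⟨p, hp1, hp2⟩ := exists_rat_btwn (show t - 1/8 < t by linarith)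
    obtain ⟨q, hq1, hq2⟩ := exists_rat_btwn (show t < t + 1/8 by linarith)
    refine ⟨u (enc [(p, q)]), (hFval _ _).mpr ⟨[(p, q)], ⟨?_, ?_⟩, ?_, rfl⟩⟩
    · intro c hc
      rw [List.mem_singleton] at hc
      subst hc
      exact le_of_lt (lt_trans hp2 hq1)
    · have : lenE [(p, q)] = (q:ℝ) - (p:ℝ) := by simp [lenE]
      rw [this]; linarith
    · exact ⟨(p, q), List.mem_singleton_self _, le_of_lt hp2, le_of_lt hq1⟩
  refine ⟨F, hFne, ⟨1, ?_⟩, ?_⟩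
  · rintro t _ a ha
    obtain ⟨σ, _, _, rfl⟩ := (hFval _ _).mp ha
    exact le_of_eq (hu _)
  · rw [Set.eq_empty_iff_forall_notMem]
    rintro A ⟨hAne, _hAcl, P, hmesh, hconv⟩
    have hη0 : (0:ℝ≥0∞) < ENNReal.ofReal (1/100) := ENNReal.ofReal_pos.mpr (by norm_num)
    have hev1 : ∀ᶠ k in Filter.atTop,
        EMetric.hausdorffEdist (msum F (P k)) A < ENNReal.ofReal (1/100) :=
      hconv.eventually_lt_const hη0
    obtain ⟨k₁, hk₁⟩ := hev1.exists
    -- capture all tags of `P k₁`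
    obtain ⟨σ, hσgood, hσlen, hσmem⟩ := exists_good_capture (P k₁).n ((P k₁).tagN)
    set j : ℕ := enc σ with hj
    -- `u j` is an element of the Riemann sum set of `P k₁`
    have hpmem : u j ∈ msum F (P k₁) := by
      have hmem : ∀ i : Fin (P k₁).n,
          ((P k₁).pt i.succ - (P k₁).pt i.castSucc) • u j
            ∈ ((P k₁).pt i.succ - (P k₁).pt i.castSucc) • F ((P k₁).tag i) := by
        intro i
        apply Set.smul_mem_smul_set
        refine (hFval _ _).mpr ⟨σ, hσgood, ?_, rfl⟩
        have hmm := hσmem i.val i.isLt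
        rwa [(P k₁).tagN_val i] at hmm
      have hsum := mem_sum_sets (Finset.univ)
        (fun i : Fin (P k₁).n => ((P k₁).pt i.succ - (P k₁).pt i.castSucc) • F ((P k₁).tag i))
        (fun i : Fin (P k₁).n => ((P k₁).pt i.succ - (P k₁).pt i.castSucc) • u j)
        (fun i _ => hmem i)
      rw [← Finset.sum_smul, (P k₁).sum_fin_lengths, one_smul] at hsum
      exact hsum
    have hinf1 : EMetric.infEdist (u j) A < ENNReal.ofReal (1/100) :=
      lt_of_le_of_lt (EMetric.infEdist_le_hausdorffEdist_of_mem hpmem) hk₁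
    obtain ⟨a, haA, hd1⟩ := EMetric.infEdist_lt_iff.mp hinf1
    -- a very fine partition
    have hδ0 : (0:ℝ) < 1/(16*((σ.length : ℝ)+1)) := by positivity
    have hev2 : ∀ᶠ k in Filter.atTop, (P k).mesh < 1/(16*((σ.length : ℝ)+1)) :=
      hmesh.eventually_lt_const hδ0
    obtain ⟨k₂, hk₂h, hk₂m⟩ := (hev1.and hev2).exists
    have hinf2 : EMetric.infEdist a (msum F (P k₂)) < ENNReal.ofReal (1/100) := by
      calc EMetric.infEdist a (msum F (P k₂))
          ≤ EMetric.hausdorffEdist A (msum F (P k₂)) :=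
            EMetric.infEdist_le_hausdorffEdist_of_mem haA
        _ = EMetric.hausdorffEdist (msum F (P k₂)) A := EMetric.hausdorffEdist_comm
        _ < ENNReal.ofReal (1/100) := hk₂h
    obtain ⟨q, hqmem, hd2⟩ := EMetric.infEdist_lt_iff.mp hinf2
    -- decompose q as a Riemann selection sum
    rw [msum] at hqmem
    obtain ⟨y, hy, rfl⟩ := exists_rep_of_mem_sum_sets Finset.univ _ q hqmem
    -- bound `f j` on the fine Riemann sum
    have hfy : ∀ i : Fin (P k₂).n,
        f j (y i) ≤ (if memE σ ((P k₂).tagN i.val) then (P k₂).dN i.val else 0) := by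
      intro i
      obtain ⟨x, hx, hyx⟩ := Set.mem_smul_set.mp (hy i (Finset.mem_univ i))
      obtain ⟨σ', hσ'good, hσ'mem, rfl⟩ := (hFval _ _).mp hx
      have hcoef : (P k₂).pt i.succ - (P k₂).pt i.castSucc = (P k₂).dN i.val := by
        rw [TaggedPartition.dN, (P k₂).ptN_val_castSucc i, (P k₂).ptN_val_succ i]
      rw [← hyx, map_smul, smul_eq_mul, hbio j (enc σ'), hcoef]
      by_cases hcase : enc σ' = j
      · have hσσ : σ' = σ := enc.injective (by rw [hcase, hj])
        have hmemE : memE σ ((P k₂).tagN i.val) := by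
          rw [(P k₂).tagN_val i, ← hσσ]
          exact hσ'mem
        rw [if_pos hcase, if_pos hmemE, mul_one]
      · rw [if_neg hcase, mul_zero]
        split
        · exact (P k₂).dN_nonneg i.val
        · exact le_rfl
    have hfq : f j (∑ i : Fin (P k₂).n, y i)
        ≤ 1/4 + 2 * (σ.length : ℝ) * (P k₂).mesh := by
      rw [map_sum]
      calc ∑ i : Fin (P k₂).n, f j (y i)
          ≤ ∑ i : Fin (P k₂).n, (if memE σ ((P k₂).tagN i.val) then (P k₂).dN i.val else 0) :=
            Finset.sum_le_sum (fun i _ => hfy i)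
        _ = ∑ k ∈ Finset.range (P k₂).n, (if memE σ ((P k₂).tagN k) then (P k₂).dN k else 0) :=
            Fin.sum_univ_eq_sum_range
              (fun k => if memE σ ((P k₂).tagN k) then (P k₂).dN k else 0) (P k₂).n
        _ = ∑ k ∈ (Finset.range (P k₂).n).filter (fun k => memE σ ((P k₂).tagN k)), (P k₂).dN k :=
            (Finset.sum_filter _ _).symm
        _ ≤ lenE σ + 2 * (σ.length : ℝ) * (P k₂).mesh := (P k₂).weight_E σ hσgood.1
        _ ≤ 1/4 + 2 * (σ.length : ℝ) * (P k₂).mesh := by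
            have := hσgood.2
            linarith
    -- numeric contradiction
    have hmesh2 : 2 * (σ.length : ℝ) * (P k₂).mesh ≤ 1/8 := by
      have hl0 : (0:ℝ) ≤ (σ.length : ℝ) := Nat.cast_nonneg _
      have hm0 := (P k₂).mesh_nonneg
      have hmlt := le_of_lt hk₂m
      have hineq : 2 * (σ.length : ℝ) * (1/(16*((σ.length : ℝ)+1))) ≤ 1/8 := by
        rw [mul_one_div, div_le_div_iff₀ (by positivity) (by norm_num : (0:ℝ) < 8)]
        nlinarith
      calc 2 * (σ.length : ℝ) * (P k₂).mesh
          ≤ 2 * (σ.length : ℝ) * (1/(16*((σ.length : ℝ)+1))) := by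
            apply mul_le_mul_of_nonneg_left hmlt (by positivity)
        _ ≤ 1/8 := hineq
    have hfp : f j (u j) = 1 := by
      rw [hbio j j, if_pos rfl]
    have hdista : dist (u j) a < 1/100 := edist_lt_ofReal.mp hd1
    have hdistq : dist a (∑ i : Fin (P k₂).n, y i) < 1/100 := edist_lt_ofReal.mp hd2
    have hdist : dist (u j) (∑ i : Fin (P k₂).n, y i) < 1/50 :=
      lt_of_le_of_lt (dist_triangle _ a _) (by linarith)
    have hlow : (5:ℝ)/8 ≤ f j (u j) - f j (∑ i : Fin (P k₂).n, y i) := by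
      rw [hfp]
      linarith
    have hupp : f j (u j) - f j (∑ i : Fin (P k₂).n, y i) ≤ 4 * dist (u j) (∑ i : Fin (P k₂).n, y i) := by
      have h1 : f j (u j) - f j (∑ i : Fin (P k₂).n, y i) = f j (u j - ∑ i : Fin (P k₂).n, y i) := by
        rw [map_sub]
      rw [h1]
      calc f j (u j - ∑ i : Fin (P k₂).n, y i)
          ≤ ‖f j (u j - ∑ i : Fin (P k₂).n, y i)‖ := le_abs_self _
        _ ≤ ‖f j‖ * ‖u j - ∑ i : Fin (P k₂).n, y i‖ := (f j).le_opNorm _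
        _ ≤ 4 * ‖u j - ∑ i : Fin (P k₂).n, y i‖ := by
            apply mul_le_mul_of_nonneg_right (hfnorm j) (norm_nonneg _)
        _ = 4 * dist (u j) (∑ i : Fin (P k₂).n, y i) := by rw [dist_eq_norm]
    linarith


/-- In every infinite-dimensional real Banach space there is a bounded multifunction `F`
on `[0,1]` with `I(F) = ∅`. -/
theorem exists_boundedMultifunction_limitSets_empty_of_infiniteDimensional
    {X : Type*} [NormedAddCommGroup X] [NormedSpace ℝ X] [CompleteSpace X]
    (hinf : ¬ FiniteDimensional ℝ X) :
    ∃ F : ℝ → Set X,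
      (∀ t ∈ Set.Icc (0 : ℝ) 1, (F t).Nonempty) ∧
      (∃ M : ℝ, ∀ t ∈ Set.Icc (0 : ℝ) 1, ∀ a ∈ F t, ‖a‖ ≤ M) ∧
      limitSets F = ∅ :=
  exists_boundedMultifunction_limitSets_empty_of_infiniteDimensional' hinf
end
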